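/- arXiv:1805.07899 — 8 statements merged into one kernel-verified Lean document; each statement's English description precedes it below -/
import Mathlib

section
/- Let r, d, m ≥ 1 and let A = {(M_j, b_j)}_{j=1}^m with M_j ∈ ℝ^{d×r} and b_j ∈ ℝ^r. Then the map M_A : ℝ^d → ℝ^m defined by M_A(x) = (‖M_1ᵀx + b_1‖², …, ‖M_mᵀx + b_m‖²) is injective on ℝ^d if and only if for every u ∈ ℝ^d and every nonzero v ∈ ℝ^d there exists j with 1 ≤ j ≤ m such that uᵀ M_j M_jᵀ v + (M_j b_j)ᵀ v ≠ 0. -/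
open Matrix

private lemma gapr_key {d r : ℕ} (N : Matrix (Fin d) (Fin r) ℝ) (c : Fin r → ℝ)
    (x y : Fin d → ℝ) :
    (∑ i : Fin r, (Nᵀ.mulVec x + c) i ^ 2) - (∑ i : Fin r, (Nᵀ.mulVec y + c) i ^ 2)
    = (x + y) ⬝ᵥ (N * Nᵀ).mulVec (x - y) + 2 * (N.mulVec c ⬝ᵥ (x - y)) := by
  have h1 : ∀ z : Fin d → ℝ, (∑ i : Fin r, (Nᵀ.mulVec z + c) i ^ 2)
      = (N.vecMul z + c) ⬝ᵥ (N.vecMul z + c) := by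
    intro z
    simp [dotProduct, Matrix.mulVec_transpose, pow_two]
  rw [h1, h1]
  rw [← Matrix.mulVec_mulVec, Matrix.dotProduct_mulVec, Matrix.mulVec_transpose,
    Matrix.add_vecMul, Matrix.sub_vecMul, dotProduct_comm (N.mulVec c),
    Matrix.dotProduct_mulVec, Matrix.sub_vecMul]
  simp only [dotProduct_add, add_dotProduct, dotProduct_sub,
    sub_dotProduct]
  rw [dotProduct_comm c (N.vecMul x), dotProduct_comm c (N.vecMul y),
    dotProduct_comm (N.vecMul y) (N.vecMul x)]
  ring

/-- The measurement map `M_A(x) = (‖M_jᵀx + b_j‖²)_{j=1}^m` is injective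
on ℝ^d iff for all `u` and all nonzero `v` there is `j` with
`uᵀ M_j M_jᵀ v + (M_j b_j)ᵀ v ≠ 0`. -/
theorem gapr_iff_real
    (r d m : ℕ) (hr : 1 ≤ r) (hd : 1 ≤ d) (hm : 1 ≤ m)
    (M : Fin m → Matrix (Fin d) (Fin r) ℝ) (b : Fin m → Fin r → ℝ) :
    Function.Injective (fun x : Fin d → ℝ => fun j : Fin m =>
      ∑ i : Fin r, ((M j)ᵀ.mulVec x + b j) i ^ 2)
    ↔ ∀ u v : Fin d → ℝ, v ≠ 0 → ∃ j : Fin m,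
        u ⬝ᵥ (M j * (M j)ᵀ).mulVec v + (M j).mulVec (b j) ⬝ᵥ v ≠ 0 := by
  constructor
  · intro hinj u v hv
    by_contra h
    push_neg at h
    have hxy : (fun x : Fin d → ℝ => fun j : Fin m =>
        ∑ i : Fin r, ((M j)ᵀ.mulVec x + b j) i ^ 2) (u + (2:ℝ)⁻¹ • v)
        = (fun x : Fin d → ℝ => fun j : Fin m =>
        ∑ i : Fin r, ((M j)ᵀ.mulVec x + b j) i ^ 2) (u - (2:ℝ)⁻¹ • v) := by
      funext j
      have hk := gapr_key (M j) (b j) (u + (2:ℝ)⁻¹ • v) (u - (2:ℝ)⁻¹ • v)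
      have e1 : (u + (2:ℝ)⁻¹ • v) + (u - (2:ℝ)⁻¹ • v) = (2:ℝ) • u := by module
      have e2 : (u + (2:ℝ)⁻¹ • v) - (u - (2:ℝ)⁻¹ • v) = v := by module
      rw [e1, e2, smul_dotProduct] at hk
      have h0 := h j
      have hsub : (∑ i : Fin r, ((M j)ᵀ.mulVec (u + (2:ℝ)⁻¹ • v) + b j) i ^ 2)
          - (∑ i : Fin r, ((M j)ᵀ.mulVec (u - (2:ℝ)⁻¹ • v) + b j) i ^ 2) = 0 := by
        rw [hk]
        simp only [smul_eq_mul]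
        linarith
      exact sub_eq_zero.mp hsub
    have heq := hinj hxy
    apply hv
    have hv0 : v = (u + (2:ℝ)⁻¹ • v) - (u - (2:ℝ)⁻¹ • v) := by module
    rw [hv0, heq, sub_self]
  · intro hyp x y hxy
    by_contra hne
    have hv : x - y ≠ 0 := sub_ne_zero.mpr hne
    obtain ⟨j, hj⟩ := hyp ((2:ℝ)⁻¹ • (x + y)) (x - y) hv
    apply hj
    have hk := gapr_key (M j) (b j) x y
    have h0 : (∑ i : Fin r, ((M j)ᵀ.mulVec x + b j) i ^ 2)
        - (∑ i : Fin r, ((M j)ᵀ.mulVec y + b j) i ^ 2) = 0 := by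
      have := congrFun hxy j
      simp only at this
      rw [this, sub_self]
    rw [h0] at hk
    rw [smul_dotProduct]
    simp only [smul_eq_mul]
    linarith
end

section
/- Let r, d ≥ 1 and let m ≥ d + ⌊d/r⌋ + ε_{d,r}, where ε_{d,r} = 0 if r divides d and ε_{d,r} = 1 otherwise. Then there exists a collection A = {(M_j, b_j)}_{j=1}^m with M_j ∈ ℝ^{d×r} and b_j ∈ ℝ^r which has the generalized affine phase retrieval property for ℝ^d. -/
open Matrix

noncomputable def extz {d : ℕ} (x : Fin d → ℝ) (n : ℕ) : ℝ :=
  if h : n < d then x ⟨n, h⟩ else 0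

lemma sum_indicator {d : ℕ} (x : Fin d → ℝ) (n : ℕ) :
    (∑ i : Fin d, (if (i : ℕ) = n then (1 : ℝ) else 0) * x i) = extz x n := by
  unfold extz
  split_ifs with h
  · rw [Finset.sum_eq_single (⟨n, h⟩ : Fin d)]
    · simp
    · intro i _ hne
      have : (i : ℕ) ≠ n := fun hc => hne (Fin.ext hc)
      simp [this]
    · simp
  · apply Finset.sum_eq_zero
    intro i _
    have : (i : ℕ) ≠ n := by omega
    simp [this]

lemma key_sum {d r : ℕ} (hr : 1 ≤ r) (x : Fin d → ℝ) (t : Fin d) :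
    (∑ c : Fin r, (extz x ((t : ℕ) / r * r + (c : ℕ)) +
        (if (t : ℕ) % r = (c : ℕ) then (1 : ℝ) else 0)) ^ 2)
      = (∑ c : Fin r, (extz x ((t : ℕ) / r * r + (c : ℕ))) ^ 2) + (2 * x t + 1) := by
  have hc0 : (t : ℕ) % r < r := Nat.mod_lt _ hr
  set c0 : Fin r := ⟨(t : ℕ) % r, hc0⟩ with hc0def
  have hext : extz x ((t : ℕ) / r * r + (c0 : ℕ)) = x t := by
    have ht : (t : ℕ) / r * r + (t : ℕ) % r = (t : ℕ) := Nat.div_add_mod' _ _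
    show extz x ((t : ℕ) / r * r + (t : ℕ) % r) = x t
    rw [ht]
    simp [extz, t.isLt]
  have hstep : ∀ c : Fin r,
      (extz x ((t : ℕ) / r * r + (c : ℕ)) +
        (if (t : ℕ) % r = (c : ℕ) then (1 : ℝ) else 0)) ^ 2
      = (extz x ((t : ℕ) / r * r + (c : ℕ))) ^ 2 +
        (if c = c0 then 2 * x t + 1 else 0) := by
    intro c
    by_cases h : c = c0
    · subst h
      rw [if_pos rfl, if_pos rfl, hext]
      ring
    · have : (t : ℕ) % r ≠ (c : ℕ) := fun hc => h (by ext; simpa using hc.symm)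
      simp [this, h]
  rw [Finset.sum_congr rfl (fun c _ => hstep c), Finset.sum_add_distrib,
    Finset.sum_ite_eq' Finset.univ c0]
  simp

/-- For `m ≥ d + ⌊d/r⌋ + ε_{d,r}` (with `ε_{d,r} = 0` if `r ∣ d` and `1`
otherwise) there exist measurements `{(M_j, b_j)}_{j=1}^m ⊂ ℝ^{d×r} × ℝ^r` having the
generalized affine phase retrieval property for ℝ^d. -/
theorem gapr_exists_real
    (r d m : ℕ) (hr : 1 ≤ r) (hd : 1 ≤ d)
    (hm : d + d / r + (if r ∣ d then 0 else 1) ≤ m) :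
    ∃ (M : Fin m → Matrix (Fin d) (Fin r) ℝ) (b : Fin m → Fin r → ℝ),
      Function.Injective (fun x : Fin d → ℝ => fun j : Fin m =>
        ∑ i : Fin r, ((M j)ᵀ.mulVec x + b j) i ^ 2) := by
  set s : ℕ := d / r + (if r ∣ d then 0 else 1) with hs
  have hsd : s + d ≤ m := by omega
  set blk : ℕ → ℕ := fun j => if j < s then j else (j - s) / r with hblk
  set Mf : Fin m → Matrix (Fin d) (Fin r) ℝ :=
    fun j i c => if (j : ℕ) < s + d ∧ (i : ℕ) = blk (j : ℕ) * r + (c : ℕ) then 1 else 0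
    with hMf
  set bf : Fin m → Fin r → ℝ :=
    fun j c => if s ≤ (j : ℕ) ∧ (j : ℕ) < s + d ∧ ((j : ℕ) - s) % r = (c : ℕ) then 1 else 0
    with hbf
  refine ⟨Mf, bf, ?_⟩
  intro x y h
  have hFval : ∀ (z : Fin d → ℝ) (j : Fin m), (j : ℕ) < s + d →
      (∑ i : Fin r, ((Mf j)ᵀ.mulVec z + bf j) i ^ 2)
      = ∑ c : Fin r, (extz z (blk (j : ℕ) * r + (c : ℕ)) +
          (if s ≤ (j : ℕ) ∧ ((j : ℕ) - s) % r = (c : ℕ) then (1 : ℝ) else 0)) ^ 2 := by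
    intro z j hj
    apply Finset.sum_congr rfl
    intro c _
    rw [Pi.add_apply]
    congr 1
    congr 1
    · simp only [hMf, mulVec, transpose_apply, dotProduct]
      rw [← sum_indicator z (blk (j : ℕ) * r + (c : ℕ))]
      exact Finset.sum_congr rfl fun i _ => by simp [hj, Matrix.transpose, Matrix.of_apply]
    · simp only [hbf]
      by_cases h1 : s ≤ (j : ℕ) ∧ ((j : ℕ) - s) % r = (c : ℕ)
      · rw [if_pos ⟨h1.1, hj, h1.2⟩, if_pos h1]
      · rw [if_neg (by tauto), if_neg h1]
  funext t
  have htlt : (t : ℕ) < d := t.isLt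
  have hj2lt : (t : ℕ) / r < s := by
    by_cases hdvd : r ∣ d
    · have : (t : ℕ) / r < d / r := Nat.div_lt_div_of_lt_of_dvd hdvd htlt
      simp only [hs, if_pos hdvd]
      omega
    · have : (t : ℕ) / r ≤ d / r := Nat.div_le_div_right (le_of_lt htlt)
      simp only [hs, if_neg hdvd]
      omega
  set j1 : Fin m := ⟨s + (t : ℕ), by omega⟩ with hj1def
  set j2 : Fin m := ⟨(t : ℕ) / r, by omega⟩ with hj2def
  have hj1v : (j1 : ℕ) = s + (t : ℕ) := rfl
  have hj2v : (j2 : ℕ) = (t : ℕ) / r := rfl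
  have hblk1 : blk (j1 : ℕ) = (t : ℕ) / r := by
    rw [hj1v]; simp only [hblk]
    rw [if_neg (by omega), Nat.add_sub_cancel_left]
  have hblk2 : blk (j2 : ℕ) = (t : ℕ) / r := by
    rw [hj2v]; simp only [hblk]
    rw [if_pos hj2lt]
  have hb1 : ∀ c : Fin r,
      (if s ≤ (j1 : ℕ) ∧ ((j1 : ℕ) - s) % r = (c : ℕ) then (1 : ℝ) else 0)
      = (if (t : ℕ) % r = (c : ℕ) then (1 : ℝ) else 0) := by
    intro c
    rw [hj1v, Nat.add_sub_cancel_left]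
    simp
  have hb2 : ∀ c : Fin r,
      (if s ≤ (j2 : ℕ) ∧ ((j2 : ℕ) - s) % r = (c : ℕ) then (1 : ℝ) else 0) = 0 := by
    intro c
    rw [hj2v, if_neg (by omega)]
  have h1 := congrFun h j1
  have h2 := congrFun h j2
  simp only [] at h1 h2
  rw [hFval x j1 (by omega), hFval y j1 (by omega), hblk1] at h1
  rw [hFval x j2 (by omega), hFval y j2 (by omega), hblk2] at h2
  simp only [hb1] at h1
  simp only [hb2, add_zero] at h2
  have hfx := key_sum hr x t
  have hfy := key_sum hr y t
  rw [h1, h2] at hfx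
  have : 2 * x t + 1 = 2 * y t + 1 := by linarith [hfy, hfx]
  linarith
end

section
/- Let r, d ≥ 1 and m ≥ 2d. Then there exists a nonzero real polynomial P in the m(dr + r) real coordinates of a tuple ((M_1, b_1), …, (M_m, b_m)) ∈ (ℝ^{d×r} × ℝ^r)^m such that every tuple with P((M_1, b_1), …, (M_m, b_m)) ≠ 0 has the generalized affine phase retrieval property for ℝ^d. In particular, a generic tuple of m ≥ 2d measurements has the generalized affine phase retrieval property for ℝ^d. -/
open Matrix


namespace GaprAux

open MvPolynomial

noncomputable section

variable (d r : ℕ)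

abbrev Vars := Fin (2*d) × ((Fin d × Fin r) ⊕ Fin r)
abbrev Rng := MvPolynomial (Vars d r) ℝ
abbrev Rows := {T : Finset (Fin (2*d)) // T.card = d + 1}
abbrev Cols := {f : Fin d → Fin (d+2) // ∑ i, (f i : ℕ) = d + 1}

/- ### generic small lemmas -/

def linP {A : Type*} [CommRing A] (c : Fin d → A) : MvPolynomial (Fin d) A :=
  ∑ i, C (c i) * X i

variable {d} in
lemma linP_isHomogeneous {A : Type*} [CommRing A] (c : Fin d → A) :
    (linP d c).IsHomogeneous 1 :=
  IsHomogeneous.sum _ _ _ fun i _ => isHomogeneous_C_mul_X (c i) i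

variable {d} in
lemma map_linP {A B : Type*} [CommRing A] [CommRing B] (φ : A →+* B) (c : Fin d → A) :
    MvPolynomial.map φ (linP d c) = linP d (fun i => φ (c i)) := by
  simp [linP, map_sum]

variable {d} in
lemma eval_linP {A : Type*} [CommRing A] (u : Fin d → A) (c : Fin d → A) :
    eval u (linP d c) = ∑ i, c i * u i := by
  simp [linP]

variable {d} in
lemma linP_mul_const {A : Type*} [CommRing A] (c : Fin d → A) (e : A) :
    linP d (fun i => c i * e) = C e * linP d c := by
  simp only [linP, Finset.mul_sum]
  exact Finset.sum_congr rfl fun i _ => by rw [MvPolynomial.C_mul]; ring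

variable {d} in
lemma isHomogeneous_det {A : Type*} [CommRing A] {n : ℕ}
    (M : Matrix (Fin n) (Fin n) (MvPolynomial (Fin d) A))
    (h : ∀ i j, (M i j).IsHomogeneous 1) : (M.det).IsHomogeneous n := by
  rw [Matrix.det_apply]
  apply IsHomogeneous.sum
  intro σ _
  have hprod : (∏ i, M (σ i) i).IsHomogeneous n := by
    have := IsHomogeneous.prod Finset.univ (fun i => M (σ i) i) (fun _ => 1)
      (fun i _ => h _ _)
    simpa using this
  rcases Int.units_eq_one_or (Equiv.Perm.sign σ) with hs | hs
  · rw [hs]; simpa using hprod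
  · rw [hs]
    have h2 : ((-1 : ℤˣ) • ∏ i, M (σ i) i) = -(∏ i, M (σ i) i) := by simp
    rw [h2]
    exact ((homogeneousSubmodule (Fin d) A n).neg_mem hprod : _)

/- ### columns: finsupp encoding -/

variable {d} in
def colFinsupp (α : Cols d) : Fin d →₀ ℕ :=
  Finsupp.equivFunOnFinite.symm (fun i => ((α.1 i : ℕ)))

variable {d} in
@[simp] lemma colFinsupp_apply (α : Cols d) (i : Fin d) : colFinsupp α i = (α.1 i : ℕ) := rfl

variable {d} in
lemma colFinsupp_injective : Function.Injective (colFinsupp (d := d)) := by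
  intro α β h
  ext i
  have := congrFun (congrArg (fun f : Fin d →₀ ℕ => (f : Fin d → ℕ)) h) i
  simpa using this

variable {d} in
lemma degree_finsupp_univ (β : Fin d →₀ ℕ) : Finsupp.degree β = ∑ i, β i :=
  Finset.sum_subset (Finset.subset_univ _) (by intro x _ hx; simpa using hx)

variable {d} in
lemma degree_colFinsupp (α : Cols d) : Finsupp.degree (colFinsupp α) = d + 1 := by
  rw [degree_finsupp_univ]; simpa using α.2

variable {d} in
lemma exists_col_of_degree (β : Fin d →₀ ℕ) (hβ : Finsupp.degree β = d + 1) :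
    ∃ α : Cols d, colFinsupp α = β := by
  have hb : ∀ i, β i < d + 2 := by
    intro i
    have := Finsupp.le_degree i β
    omega
  refine ⟨⟨fun i => ⟨β i, hb i⟩, ?_⟩, ?_⟩
  · rw [degree_finsupp_univ] at hβ; simpa using hβ
  · ext i; simp

variable {d} in
lemma eval_eq_sum_cols (f : MvPolynomial (Fin d) ℝ) (hf : f.IsHomogeneous (d+1))
    (x : Fin d → ℝ) :
    eval x f = ∑ α : Cols d, coeff (colFinsupp α) f * ∏ i, x i ^ (α.1 i : ℕ) := by
  rw [eval_eq']
  have hsub : f.support ⊆ Finset.univ.image colFinsupp := by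
    intro β hβ
    have hdeg : Finsupp.degree β = d + 1 := by
      rw [Finsupp.degree_eq_weight_one]; exact hf (mem_support_iff.mp hβ)
    rcases exists_col_of_degree β hdeg with ⟨α, hα⟩
    exact Finset.mem_image.2 ⟨α, Finset.mem_univ _, hα⟩
  rw [Finset.sum_subset hsub (by
    intro β _ hβ
    rw [notMem_support_iff.mp hβ, zero_mul])]
  rw [Finset.sum_image (fun α _ β _ h => colFinsupp_injective h)]
  exact Finset.sum_congr rfl fun α _ => by simp

/- ### the certificate polynomial -/

def colsEquivSym : Cols d ≃ Sym (Fin d) (d+1) where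
  toFun α := ⟨Finsupp.toMultiset (colFinsupp α), by
    rw [Finsupp.card_toMultiset, Finsupp.sum_fintype]
    · simpa using α.2
    · intro; rfl⟩
  invFun s := ⟨fun i => ⟨Multiset.count i s.1, by
      have h1 := Multiset.count_le_card i s.1
      have h2 : Multiset.card s.1 = d + 1 := s.2
      omega⟩, by
    show ∑ i : Fin d, Multiset.count i s.1 = d + 1
    have key : ∑ i : Fin d, Multiset.count i s.1 = Multiset.card s.1 := by
      rw [← Multiset.toFinset_sum_count_eq s.1]
      exact (Finset.sum_subset (Finset.subset_univ _) (by
        intro x _ hx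
        simpa [Multiset.count_eq_zero] using fun h => hx (Multiset.mem_toFinset.2 h))).symm
    exact key.trans s.2⟩
  left_inv α := by
    ext i
    simp [colFinsupp, Finsupp.count_toMultiset]
  right_inv s := by
    ext a
    simp [colFinsupp, Finsupp.count_toMultiset]

theorem card_cols_eq_rows : Fintype.card (Cols d) = Fintype.card (Rows d) := by
  rw [Fintype.card_congr (colsEquivSym d), Sym.card_sym_eq_multichoose,
    Fintype.card_finset_len, Nat.multichoose_eq, Fintype.card_fin, Fintype.card_fin]
  congr 1
  omega

def colEquiv : Cols d ≃ Rows d := Fintype.equivOfCardEq (card_cols_eq_rows d)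

/-- symbolic coefficient of `u i` in entry `(j,k)` of the matrix `C(u)` -/
def Wc (i : Fin d) (j : Fin (2*d)) (k : Fin (d+1)) : Rng d r :=
  if h : (k : ℕ) < d then
    ∑ s : Fin r, X (j, Sum.inl (i, s)) * X (j, Sum.inl (⟨k, h⟩, s))
  else
    2 * ∑ s : Fin r, X (j, Sum.inl (i, s)) * X (j, Sum.inr s)

def pT (T : Rows d) : MvPolynomial (Fin d) (Rng d r) :=
  Matrix.det (Matrix.of fun a k : Fin (d+1) =>
    linP d (fun i => Wc d r i (T.1.orderEmbOfFin T.2 a) k))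

def Ppoly : Rng d r :=
  Matrix.det (Matrix.of fun T T' : Rows d =>
    MvPolynomial.coeff (colFinsupp ((colEquiv d).symm T')) (pT d r T))

/- ### evaluation at a real tuple -/

variable {d r} in
def ptOf (M : Fin (2*d) → Matrix (Fin d) (Fin r) ℝ) (b : Fin (2*d) → Fin r → ℝ) :
    Vars d r → ℝ :=
  fun p => Sum.elim (fun ij : Fin d × Fin r => M p.1 ij.1 ij.2) (fun s : Fin r => b p.1 s) p.2

variable {d r} in
def cW (M : Fin (2*d) → Matrix (Fin d) (Fin r) ℝ) (b : Fin (2*d) → Fin r → ℝ)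
    (i : Fin d) (j : Fin (2*d)) (k : Fin (d+1)) : ℝ :=
  if h : (k : ℕ) < d then ∑ s, M j i s * M j ⟨k, h⟩ s
  else 2 * ∑ s, M j i s * b j s

variable {d r} in
lemma eval_Wc (M : Fin (2*d) → Matrix (Fin d) (Fin r) ℝ) (b : Fin (2*d) → Fin r → ℝ)
    (i : Fin d) (j : Fin (2*d)) (k : Fin (d+1)) :
    eval (ptOf M b) (Wc d r i j k) = cW M b i j k := by
  unfold Wc cW
  split
  · simp [ptOf]
  · simp [ptOf]

variable {d r} in
def pReal (M : Fin (2*d) → Matrix (Fin d) (Fin r) ℝ) (b : Fin (2*d) → Fin r → ℝ)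
    (T : Rows d) : MvPolynomial (Fin d) ℝ :=
  MvPolynomial.map (eval (ptOf M b)) (pT d r T)

variable {d r} in
lemma pReal_eq (M : Fin (2*d) → Matrix (Fin d) (Fin r) ℝ) (b : Fin (2*d) → Fin r → ℝ)
    (T : Rows d) :
    pReal M b T = Matrix.det (Matrix.of fun a k : Fin (d+1) =>
      linP d (fun i => cW M b i (T.1.orderEmbOfFin T.2 a) k)) := by
  unfold pReal pT
  rw [RingHom.map_det]
  refine congrArg Matrix.det (Matrix.ext fun a k => ?_)
  simp only [RingHom.mapMatrix_apply, Matrix.map_apply, Matrix.of_apply, map_linP]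
  exact congrArg (linP d) (funext fun i => eval_Wc M b i _ k)

variable {d r} in
lemma pReal_isHomogeneous (M : Fin (2*d) → Matrix (Fin d) (Fin r) ℝ)
    (b : Fin (2*d) → Fin r → ℝ) (T : Rows d) :
    (pReal M b T).IsHomogeneous (d+1) := by
  rw [pReal_eq]
  exact isHomogeneous_det _ (fun a k => linP_isHomogeneous _)

variable {d r} in
lemma eval_Ppoly (M : Fin (2*d) → Matrix (Fin d) (Fin r) ℝ) (b : Fin (2*d) → Fin r → ℝ) :
    eval (ptOf M b) (Ppoly d r) = Matrix.det (Matrix.of fun T T' : Rows d =>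
      coeff (colFinsupp ((colEquiv d).symm T')) (pReal M b T)) := by
  unfold Ppoly
  rw [RingHom.map_det]
  congr 1

/- ### key algebraic identity -/

variable {d r} in
lemma keyId (M : Matrix (Fin d) (Fin r) ℝ) (bb : Fin r → ℝ) (x y : Fin d → ℝ)
    (h : ∑ s : Fin r, (Mᵀ.mulVec x + bb) s ^ 2 = ∑ s : Fin r, (Mᵀ.mulVec y + bb) s ^ 2) :
    (∑ kk : Fin d, (∑ i, (∑ s, M i s * M kk s) * (x i - y i)) * (x kk + y kk))
      + (∑ i, (2 * ∑ s, M i s * bb s) * (x i - y i)) = 0 := by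
  have hm : ∀ v : Fin d → ℝ, ∀ s, (Mᵀ.mulVec v + bb) s = (∑ i, M i s * v i) + bb s := by
    intro v s
    simp [Matrix.mulVec, dotProduct, Matrix.transpose_apply]
  have key : ∀ s : Fin r,
      (Mᵀ.mulVec x + bb) s ^ 2 - (Mᵀ.mulVec y + bb) s ^ 2
      = (∑ i, M i s * (x i - y i)) * (∑ kk, M kk s * (x kk + y kk))
        + 2 * bb s * (∑ i, M i s * (x i - y i)) := by
    intro s
    rw [hm x, hm y]
    have e1 : ∑ i, M i s * (x i - y i) = (∑ i, M i s * x i) - (∑ i, M i s * y i) := by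
      rw [← Finset.sum_sub_distrib]
      exact Finset.sum_congr rfl fun i _ => by ring
    have e2 : ∑ kk, M kk s * (x kk + y kk) = (∑ i, M i s * x i) + (∑ i, M i s * y i) := by
      rw [← Finset.sum_add_distrib]
      exact Finset.sum_congr rfl fun i _ => by ring
    rw [e1, e2]
    ring
  have h0 : ∑ s : Fin r, ((∑ i, M i s * (x i - y i)) * (∑ kk, M kk s * (x kk + y kk))
      + 2 * bb s * (∑ i, M i s * (x i - y i))) = 0 := by
    rw [← Finset.sum_congr rfl (fun s _ => key s), Finset.sum_sub_distrib, h, sub_self]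
  rw [← h0]
  rw [Finset.sum_add_distrib]
  congr 1
  · -- ∑ kk, (∑ i, (∑ s, M i s * M kk s) * (x i - y i)) * (x kk + y kk)
    --   = ∑ s, (∑ i, M i s * (x i - y i)) * (∑ kk, M kk s * (x kk + y kk))
    have lhs1 : ∀ kk, (∑ i, (∑ s, M i s * M kk s) * (x i - y i)) * (x kk + y kk)
        = ∑ i, ∑ s, (M i s * (x i - y i)) * (M kk s * (x kk + y kk)) := by
      intro kk
      rw [Finset.sum_mul]
      exact Finset.sum_congr rfl fun i _ => by
        rw [Finset.sum_mul, Finset.sum_mul]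
        exact Finset.sum_congr rfl fun s _ => by ring
    have rhs1 : ∀ s, (∑ i, M i s * (x i - y i)) * (∑ kk, M kk s * (x kk + y kk))
        = ∑ i, ∑ kk, (M i s * (x i - y i)) * (M kk s * (x kk + y kk)) := by
      intro s
      rw [Finset.sum_mul_sum]
    rw [Finset.sum_congr rfl fun kk _ => lhs1 kk, Finset.sum_congr rfl fun s _ => rhs1 s]
    exact Finset.sum_comm.trans
      ((Finset.sum_congr rfl fun i _ => Finset.sum_comm).trans Finset.sum_comm)
  · have lhs2 : ∀ i, (2 * ∑ s, M i s * bb s) * (x i - y i)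
        = ∑ s, 2 * bb s * (M i s * (x i - y i)) := by
      intro i
      rw [Finset.mul_sum, Finset.sum_mul]
      exact Finset.sum_congr rfl fun s _ => by ring
    have rhs2 : ∀ s, 2 * bb s * (∑ i, M i s * (x i - y i))
        = ∑ i, 2 * bb s * (M i s * (x i - y i)) := by
      intro s
      rw [Finset.mul_sum]
    rw [Finset.sum_congr rfl fun i _ => lhs2 i, Finset.sum_congr rfl fun s _ => rhs2 s]
    exact Finset.sum_comm

/- ### Lemma A: nonvanishing certificate implies injectivity -/

variable {d r} in
lemma cW_castSucc (M : Fin (2*d) → Matrix (Fin d) (Fin r) ℝ) (b : Fin (2*d) → Fin r → ℝ)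
    (i : Fin d) (j : Fin (2*d)) (kk : Fin d) :
    cW M b i j kk.castSucc = ∑ s, M j i s * M j kk s := by
  unfold cW
  rw [dif_pos (by simp [kk.isLt])]
  refine Finset.sum_congr rfl fun s _ => ?_
  congr 1

variable {d r} in
lemma cW_last (M : Fin (2*d) → Matrix (Fin d) (Fin r) ℝ) (b : Fin (2*d) → Fin r → ℝ)
    (i : Fin d) (j : Fin (2*d)) :
    cW M b i j (Fin.last d) = 2 * ∑ s, M j i s * b j s := by
  unfold cW
  rw [dif_neg (by simp)]

variable {d r} in
lemma lemmaA (M : Fin (2*d) → Matrix (Fin d) (Fin r) ℝ) (b : Fin (2*d) → Fin r → ℝ)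
    (hP : eval (ptOf M b) (Ppoly d r) ≠ 0) :
    Function.Injective (fun x : Fin d → ℝ => fun j : Fin (2*d) =>
      ∑ i : Fin r, ((M j)ᵀ.mulVec x + b j) i ^ 2) := by
  intro x y hxy
  by_contra hne
  obtain ⟨i₀, hi₀⟩ : ∃ i₀, x i₀ - y i₀ ≠ 0 := by
    by_contra hall
    push_neg at hall
    exact hne (funext fun i => by have := hall i; linarith)
  set u : Fin d → ℝ := fun i => x i - y i with hudef
  set w : Fin (d+1) → ℝ := Fin.snoc (fun k => x k + y k) 1 with hw
  have hwne : w ≠ 0 := by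
    intro h0
    have := congrFun h0 (Fin.last d)
    rw [hw] at this
    simp at this
  have hvanish : ∀ T : Rows d, eval u (pReal M b T) = 0 := by
    intro T
    have hker : (Matrix.of fun a k : Fin (d+1) =>
        ∑ i, cW M b i (T.1.orderEmbOfFin T.2 a) k * u i).mulVec w = 0 := by
      funext a
      set j := T.1.orderEmbOfFin T.2 a with hj
      show ∑ k, (∑ i, cW M b i j k * u i) * w k = 0
      rw [Fin.sum_univ_castSucc]
      have hcast : ∀ kk : Fin d,
          (∑ i, cW M b i j kk.castSucc * u i) * w kk.castSucc
            = (∑ i, (∑ s, M j i s * M j kk s) * (x i - y i)) * (x kk + y kk) := by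
        intro kk
        rw [hw]
        simp only [Fin.snoc_castSucc]
        congr 1
        exact Finset.sum_congr rfl fun i _ => by rw [cW_castSucc]
      have hlast : (∑ i, cW M b i j (Fin.last d) * u i) * w (Fin.last d)
          = ∑ i, (2 * ∑ s, M j i s * b j s) * (x i - y i) := by
        rw [hw]
        simp only [Fin.snoc_last, mul_one]
        exact Finset.sum_congr rfl fun i _ => by rw [cW_last]
      rw [Finset.sum_congr rfl fun kk _ => hcast kk, hlast]
      exact keyId (M j) (b j) x y (congrFun hxy j)
    have hdet : (Matrix.of fun a k : Fin (d+1) =>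
        ∑ i, cW M b i (T.1.orderEmbOfFin T.2 a) k * u i).det = 0 :=
      Matrix.exists_mulVec_eq_zero_iff.mp ⟨w, hwne, hker⟩
    rw [pReal_eq, RingHom.map_det]
    rw [← hdet]
    refine congrArg Matrix.det (Matrix.ext fun a k => ?_)
    simp [RingHom.mapMatrix_apply, Matrix.map_apply, eval_linP]
  -- invert the coefficient matrix
  set PmatR : Matrix (Rows d) (Rows d) ℝ := Matrix.of fun T T' =>
    coeff (colFinsupp ((colEquiv d).symm T')) (pReal M b T) with hPmatR
  have hdetP : PmatR.det ≠ 0 := by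
    rw [hPmatR, ← eval_Ppoly]
    exact hP
  have hinv := Matrix.nonsing_inv_mul PmatR (isUnit_iff_ne_zero.mpr hdetP)
  set α₀ : Cols d := ⟨fun i => if i = i₀ then ⟨d+1, by omega⟩ else ⟨0, by omega⟩, by
    simp [apply_ite (fun z : Fin (d+2) => (z : ℕ))]⟩ with hα₀
  set lam : Rows d → ℝ := fun T => PmatR⁻¹ ((colEquiv d) α₀) T with hlamdef
  have hlam : ∀ α : Cols d,
      ∑ T, lam T * coeff (colFinsupp α) (pReal M b T) = if α = α₀ then 1 else 0 := by
    intro α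
    have h1 : (PmatR⁻¹ * PmatR) ((colEquiv d) α₀) ((colEquiv d) α)
        = (1 : Matrix (Rows d) (Rows d) ℝ) ((colEquiv d) α₀) ((colEquiv d) α) := by
      rw [hinv]
    rw [Matrix.mul_apply, Matrix.one_apply] at h1
    simp only [hPmatR, Matrix.of_apply, Equiv.symm_apply_apply] at h1
    rw [show (∑ T, lam T * coeff (colFinsupp α) (pReal M b T)) = ∑ T, PmatR⁻¹ ((colEquiv d) α₀) T * coeff (colFinsupp α) (pReal M b T) from rfl, h1]
    by_cases hc : α = α₀
    · rw [if_pos hc, if_pos (by rw [hc])]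
    · rw [if_neg (fun hcc => hc ((colEquiv d).injective hcc.symm)), if_neg hc]
  set q : MvPolynomial (Fin d) ℝ := ∑ T, C (lam T) * pReal M b T with hqdef
  have hq : q = monomial (colFinsupp α₀) 1 := by
    apply MvPolynomial.ext
    intro β
    have hcq : coeff β q = ∑ T, lam T * coeff β (pReal M b T) := by
      rw [hqdef, MvPolynomial.coeff_sum]
      exact Finset.sum_congr rfl fun T _ => by rw [coeff_C_mul]
    rw [coeff_monomial]
    by_cases hβ : Finsupp.degree β = d + 1
    · obtain ⟨αβ, hαβ⟩ := exists_col_of_degree β hβ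
      rw [hcq, ← hαβ, hlam αβ]
      by_cases hc : αβ = α₀
      · rw [if_pos hc, if_pos (by rw [hc])]
      · rw [if_neg hc, if_neg (fun hcc => hc (colFinsupp_injective hcc.symm))]
    · rw [hcq]
      have hz : ∀ T, coeff β (pReal M b T) = 0 := by
        intro T
        refine (pReal_isHomogeneous M b T).coeff_eq_zero ?_
        exact hβ
      rw [Finset.sum_congr rfl fun T _ => by rw [hz T, mul_zero]]
      rw [Finset.sum_const_zero]
      rw [if_neg (fun hcc => hβ (by rw [← hcc, degree_colFinsupp]))]
  have heval0 : eval u q = 0 := by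
    rw [hqdef, map_sum]
    rw [Finset.sum_congr rfl fun T _ => by rw [_root_.map_mul, eval_C, hvanish T, mul_zero]]
    exact Finset.sum_const_zero
  rw [hq] at heval0
  have hevalm : eval u (monomial (colFinsupp α₀) 1) = u i₀ ^ (d+1) := by
    rw [eval_monomial, one_mul, Finsupp.prod_fintype _ _ (fun i => pow_zero _)]
    rw [Finset.prod_eq_single i₀ (by
      intro i _ hne'
      rw [colFinsupp_apply]
      simp [hα₀, hne']) (by simp)]
    rw [colFinsupp_apply]
    simp [hα₀]
  rw [hevalm] at heval0
  exact hi₀ (pow_eq_zero_iff (by omega) |>.mp heval0)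


/- ### Lemma B: the certificate polynomial is nonzero -/

variable {d r} in
lemma Ppoly_ne_zero (hd : 1 ≤ d) (hr : 1 ≤ r) : Ppoly d r ≠ 0 := by
  classical
  set t : Fin (2*d) → ℝ := fun j => ((j : ℕ) : ℝ) with ht
  set s0 : Fin r := ⟨0, hr⟩ with hs0
  set Mstar : Fin (2*d) → Matrix (Fin d) (Fin r) ℝ :=
    fun j => Matrix.of fun i s => if s = s0 then (t j)^(i:ℕ) else 0 with hMstar
  set bstar : Fin (2*d) → Fin r → ℝ :=
    fun j s => if s = s0 then (t j)^d / 2 else 0 with hbstar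
  have hcW : ∀ (i : Fin d) (j : Fin (2*d)) (k : Fin (d+1)),
      cW Mstar bstar i j k = (t j) ^ ((i:ℕ) + (k:ℕ)) := by
    intro i j k
    unfold cW
    split
    · next h =>
      have : ∀ s : Fin r, Mstar j i s * Mstar j (⟨(k:ℕ), h⟩ : Fin d) s
          = if s = s0 then (t j)^(i:ℕ) * (t j)^((k:ℕ)) else 0 := by
        intro s
        simp only [hMstar, Matrix.of_apply]
        split <;> simp
      rw [Finset.sum_congr rfl fun s _ => this s, Finset.sum_ite_eq' Finset.univ s0]
      rw [if_pos (Finset.mem_univ _), ← pow_add]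
    · next h =>
      have hk : (k : ℕ) = d := by omega
      have : ∀ s : Fin r, Mstar j i s * bstar j s
          = if s = s0 then (t j)^(i:ℕ) * ((t j)^d / 2) else 0 := by
        intro s
        simp only [hMstar, hbstar, Matrix.of_apply]
        split <;> simp
      rw [Finset.sum_congr rfl fun s _ => this s, Finset.sum_ite_eq' Finset.univ s0]
      rw [if_pos (Finset.mem_univ _), hk, pow_add]
      ring
  -- the factored form of pReal at the example point
  set qpoly : Rows d → Polynomial ℝ :=
    fun T' => ∏ k ∈ (T'.1)ᶜ, (Polynomial.X - Polynomial.C (t k)) with hqpoly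
  set wpt : Rows d → Fin d → ℝ := fun T' i => (qpoly T').coeff (i : ℕ) with hwpt
  set Lrow : ℝ → MvPolynomial (Fin d) ℝ := fun z => linP d (fun i => z ^ (i:ℕ)) with hLrow
  set vandT : Rows d → ℝ :=
    fun T => Matrix.det (Matrix.vandermonde (fun a : Fin (d+1) => t (T.1.orderEmbOfFin T.2 a)))
    with hvandT
  have hfact : ∀ T : Rows d, pReal Mstar bstar T
      = (∏ a : Fin (d+1), Lrow (t (T.1.orderEmbOfFin T.2 a))) * C (vandT T) := by
    intro T
    rw [pReal_eq]
    have hmat : (Matrix.of fun a k : Fin (d+1) =>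
          linP d (fun i => cW Mstar bstar i (T.1.orderEmbOfFin T.2 a) k))
        = Matrix.of fun a k : Fin (d+1) =>
            Lrow (t (T.1.orderEmbOfFin T.2 a))
              * C ((t (T.1.orderEmbOfFin T.2 a)) ^ (k:ℕ)) := by
      refine Matrix.ext fun a k => ?_
      have : (fun i : Fin d => cW Mstar bstar i (T.1.orderEmbOfFin T.2 a) k)
          = fun i : Fin d => (t (T.1.orderEmbOfFin T.2 a)) ^ (i:ℕ)
              * (t (T.1.orderEmbOfFin T.2 a)) ^ (k:ℕ) := by
        funext i
        rw [hcW, pow_add]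
      rw [Matrix.of_apply, Matrix.of_apply, this, linP_mul_const, mul_comm]
    rw [hmat]
    have h2 : (Matrix.of fun a k : Fin (d+1) =>
          Lrow (t (T.1.orderEmbOfFin T.2 a)) * C ((t (T.1.orderEmbOfFin T.2 a)) ^ (k:ℕ)))
        = Matrix.of fun a k : Fin (d+1) =>
            (fun a => Lrow (t (T.1.orderEmbOfFin T.2 a))) a
              * (Matrix.of fun a k : Fin (d+1) => (C ((t (T.1.orderEmbOfFin T.2 a)) ^ (k:ℕ))
                : MvPolynomial (Fin d) ℝ)) a k := rfl
    rw [h2]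
    rw [Matrix.det_mul_column (fun a => Lrow (t (T.1.orderEmbOfFin T.2 a)))
      (Matrix.of fun a k : Fin (d+1) => (C ((t (T.1.orderEmbOfFin T.2 a)) ^ (k:ℕ))
        : MvPolynomial (Fin d) ℝ))]
    congr 1
    have : (Matrix.of fun a k : Fin (d+1) => (C ((t (T.1.orderEmbOfFin T.2 a)) ^ (k:ℕ))
          : MvPolynomial (Fin d) ℝ))
        = (C : ℝ →+* MvPolynomial (Fin d) ℝ).mapMatrix
            (Matrix.vandermonde (fun a : Fin (d+1) => t (T.1.orderEmbOfFin T.2 a))) := by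
      refine Matrix.ext fun a k => ?_
      simp [Matrix.vandermonde, RingHom.mapMatrix_apply, Matrix.map_apply]
    rw [this, ← RingHom.map_det]
  have hqdeg : ∀ T' : Rows d, (qpoly T').natDegree = d - 1 := by
    intro T'
    rw [hqpoly]
    rw [Polynomial.natDegree_prod _ _ (fun k _ => Polynomial.X_sub_C_ne_zero (t k))]
    rw [Finset.sum_congr rfl fun k _ => Polynomial.natDegree_X_sub_C (t k)]
    rw [Finset.sum_const, smul_eq_mul, mul_one, Finset.card_compl, Fintype.card_fin, T'.2]
    omega
  have hevalL : ∀ (T' : Rows d) (z : ℝ),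
      eval (wpt T') (Lrow z) = (qpoly T').eval z := by
    intro T' z
    rw [hLrow, eval_linP]
    rw [Polynomial.eval_eq_sum_range' (n := d) (by rw [hqdeg]; omega) z]
    rw [← Fin.sum_univ_eq_sum_range (fun i => (qpoly T').coeff i * z ^ i) d]
    exact Finset.sum_congr rfl fun i _ => by rw [hwpt]; ring
  have hqeval : ∀ (T' : Rows d) (j : Fin (2*d)),
      (qpoly T').eval (t j) = ∏ k ∈ (T'.1)ᶜ, (t j - t k) := by
    intro T' j
    rw [hqpoly, Polynomial.eval_prod]
    exact Finset.prod_congr rfl fun k _ => by simp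
  have htinj : Function.Injective t := by
    intro a b hab
    exact Fin.ext (Nat.cast_injective hab)
  -- the matrix of evaluations
  set Msq : Matrix (Rows d) (Rows d) ℝ :=
    Matrix.of fun T T' => eval (wpt T') (pReal Mstar bstar T) with hMsq
  set PmatRs : Matrix (Rows d) (Rows d) ℝ := Matrix.of fun T T' =>
    coeff (colFinsupp ((colEquiv d).symm T')) (pReal Mstar bstar T) with hPmatRs
  set Vsq : Matrix (Rows d) (Rows d) ℝ := Matrix.of fun T' T'' =>
    ∏ i, wpt T'' i ^ ((((colEquiv d).symm T').1 i : ℕ)) with hVsq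
  have hmul : Msq = PmatRs * Vsq := by
    refine Matrix.ext fun T T'' => ?_
    rw [Matrix.mul_apply]
    show eval (wpt T'') (pReal Mstar bstar T) = _
    rw [eval_eq_sum_cols _ (pReal_isHomogeneous Mstar bstar T) (wpt T'')]
    refine Fintype.sum_equiv (colEquiv d) _ _ fun α => ?_
    simp only [hPmatRs, hVsq, Matrix.of_apply, Equiv.symm_apply_apply]
  set Dg : Rows d → ℝ := fun T =>
    (∏ a : Fin (d+1), (qpoly T).eval (t (T.1.orderEmbOfFin T.2 a))) * vandT T with hDg
  have hdiag : Msq = Matrix.diagonal Dg := by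
    refine Matrix.ext fun T T' => ?_
    by_cases hTT : T = T'
    · subst hTT
      rw [Matrix.diagonal_apply_eq]
      show eval (wpt T) (pReal Mstar bstar T) = Dg T
      rw [hfact T, _root_.map_mul, eval_C, map_prod]
      rw [hDg]
      congr 1
      exact Finset.prod_congr rfl fun a _ => hevalL T _
    · rw [Matrix.diagonal_apply_ne _ hTT]
      show eval (wpt T') (pReal Mstar bstar T) = 0
      have hns : ¬ T.1 ⊆ T'.1 := by
        intro hsub
        exact hTT (Subtype.ext (Finset.eq_of_subset_of_card_le hsub
          (le_of_eq (T'.2.trans T.2.symm))))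
      obtain ⟨j0, hj0T, hj0T'⟩ := Finset.not_subset.mp hns
      obtain ⟨a0, ha0⟩ : ∃ a0, T.1.orderEmbOfFin T.2 a0 = j0 := by
        have := Finset.range_orderEmbOfFin T.1 T.2
        have hmem : j0 ∈ Set.range (T.1.orderEmbOfFin T.2) := by
          rw [this]; exact hj0T
        exact hmem
      rw [hfact T, _root_.map_mul, map_prod]
      have hzero : eval (wpt T') (Lrow (t (T.1.orderEmbOfFin T.2 a0))) = 0 := by
        rw [hevalL, ha0, hqeval]
        exact Finset.prod_eq_zero (Finset.mem_compl.mpr hj0T') (sub_self _)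
      rw [Finset.prod_eq_zero (Finset.mem_univ a0) hzero, zero_mul]
  have hDgne : ∀ T, Dg T ≠ 0 := by
    intro T
    rw [hDg]
    apply mul_ne_zero
    · rw [Finset.prod_ne_zero_iff]
      intro a _
      rw [hqeval]
      rw [Finset.prod_ne_zero_iff]
      intro k hk
      have : T.1.orderEmbOfFin T.2 a ≠ k := by
        intro hh
        exact (Finset.mem_compl.mp hk) (hh ▸ Finset.orderEmbOfFin_mem T.1 T.2 a)
      exact sub_ne_zero_of_ne (fun hc => this (htinj hc))
    · show (Matrix.vandermonde fun a : Fin (d+1) => t (T.1.orderEmbOfFin T.2 a)).det ≠ 0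
      rw [Matrix.det_vandermonde]
      rw [Finset.prod_ne_zero_iff]
      intro a _
      rw [Finset.prod_ne_zero_iff]
      intro b hb
      have hlt : a < b := Finset.mem_Ioi.mp hb
      have : t (T.1.orderEmbOfFin T.2 a) < t (T.1.orderEmbOfFin T.2 b) := by
        have := (T.1.orderEmbOfFin T.2).strictMono hlt
        exact_mod_cast Nat.cast_lt.mpr this
      exact sub_ne_zero_of_ne (ne_of_gt this)
  have hdetMsq : Msq.det ≠ 0 := by
    rw [hdiag, Matrix.det_diagonal]
    exact Finset.prod_ne_zero_iff.mpr fun T _ => hDgne T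
  have hdetP : PmatRs.det ≠ 0 := by
    intro h0
    rw [hmul, Matrix.det_mul, h0, zero_mul] at hdetMsq
    exact hdetMsq rfl
  intro hzero
  apply hdetP
  rw [← eval_Ppoly Mstar bstar, hzero, map_zero]


end
end GaprAux

/-- If `m ≥ 2d`, there is a nonzero real polynomial `P` in the
`m(dr + r)` coordinates of a tuple `((M_1,b_1),…,(M_m,b_m))` such that every tuple
at which `P` does not vanish has the generalized affine phase retrieval property
for ℝ^d (so a generic tuple does). -/
theorem gapr_generic_real
    (r d m : ℕ) (hr : 1 ≤ r) (hd : 1 ≤ d) (hm : 2 * d ≤ m) :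
    ∃ P : MvPolynomial (Fin m × ((Fin d × Fin r) ⊕ Fin r)) ℝ, P ≠ 0 ∧
      ∀ (M : Fin m → Matrix (Fin d) (Fin r) ℝ) (b : Fin m → Fin r → ℝ),
        MvPolynomial.eval
          (fun p : Fin m × ((Fin d × Fin r) ⊕ Fin r) =>
            Sum.elim (fun ij : Fin d × Fin r => M p.1 ij.1 ij.2)
              (fun i : Fin r => b p.1 i) p.2) P ≠ 0 →
        Function.Injective (fun x : Fin d → ℝ => fun j : Fin m =>
          ∑ i : Fin r, ((M j)ᵀ.mulVec x + b j) i ^ 2) := by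
  classical
  set femb : GaprAux.Vars d r → (Fin m × ((Fin d × Fin r) ⊕ Fin r)) :=
    fun v => (⟨v.1.1, lt_of_lt_of_le v.1.2 hm⟩, v.2) with hfemb
  have hinj : Function.Injective femb := by
    rintro ⟨j1, z1⟩ ⟨j2, z2⟩ h
    simp only [hfemb, Prod.mk.injEq, Fin.mk.injEq] at h
    exact Prod.ext (Fin.ext h.1) h.2
  refine ⟨MvPolynomial.rename femb (GaprAux.Ppoly d r), ?_, ?_⟩
  · intro h0
    apply GaprAux.Ppoly_ne_zero hd hr
    apply MvPolynomial.rename_injective femb hinj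
    rw [h0, map_zero]
  · intro M b heval
    have heval' : MvPolynomial.eval
        (GaprAux.ptOf (fun j : Fin (2*d) => M ⟨j.1, lt_of_lt_of_le j.2 hm⟩)
          (fun j : Fin (2*d) => b ⟨j.1, lt_of_lt_of_le j.2 hm⟩))
        (GaprAux.Ppoly d r) ≠ 0 := by
      rw [MvPolynomial.eval_rename] at heval
      exact heval
    have hinj2d := GaprAux.lemmaA _ _ heval'
    intro x y hxy
    apply hinj2d
    funext j
    exact congrFun hxy ⟨j.1, lt_of_lt_of_le j.2 hm⟩
end

section
/- Let r, d, m ≥ 1 and let A = {(M_j, b_j)}_{j=1}^m with M_j ∈ ℝ^{d×r} and b_j ∈ ℝ^r. For each j define the (d+1)×(d+1) real symmetric matrix A_j with block form A_j = [[M_j M_jᵀ, M_j b_j], [(M_j b_j)ᵀ, b_jᵀ b_j]]. Then A does NOT have the generalized affine phase retrieval property for ℝ^d if and only if there exists a matrix Q ∈ ℝ^{(d+1)×(d+1)} satisfying: Qᵀ = Q, Q_{d+1,d+1} = 0, rank(Q) ≤ 2, tr(A_jᵀ Q) = 0 for all j = 1, …, m, and Q_{1,d+1}² + Q_{2,d+1}²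 + ⋯ + Q_{d,d+1}² = 1. -/
open Matrix

/-- The `(d+1)×(d+1)` real symmetric matrix
`A = [[M Mᵀ, M b], [(M b)ᵀ, bᵀ b]]` associated with `(M, b) ∈ ℝ^{d×r} × ℝ^r`. -/
def affineMeasMatrixR (d r : ℕ) (M : Matrix (Fin d) (Fin r) ℝ) (b : Fin r → ℝ) :
    Matrix (Fin (d + 1)) (Fin (d + 1)) ℝ :=
  Matrix.of fun i k =>
    if hi : (i : ℕ) < d then
      if hk : (k : ℕ) < d then (M * Mᵀ) ⟨i, hi⟩ ⟨k, hk⟩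
      else M.mulVec b ⟨i, hi⟩
    else
      if hk : (k : ℕ) < d then M.mulVec b ⟨k, hk⟩
      else b ⬝ᵥ b

/-- Auxiliary "lifted matrix" `[[M],[bᵀ]]`. -/
def gmatAux (d r : ℕ) (M : Matrix (Fin d) (Fin r) ℝ) (b : Fin r → ℝ)
    (i : Fin (d + 1)) (l : Fin r) : ℝ :=
  if h : (i : ℕ) < d then M ⟨i, h⟩ l else b l

lemma affineMeasMatrixR_eq_sum (d r : ℕ) (M : Matrix (Fin d) (Fin r) ℝ) (b : Fin r → ℝ)
    (i k : Fin (d + 1)) :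
    affineMeasMatrixR d r M b i k = ∑ l : Fin r, gmatAux d r M b i l * gmatAux d r M b k l := by
  unfold affineMeasMatrixR gmatAux
  by_cases hi : (i : ℕ) < d <;> by_cases hk : (k : ℕ) < d <;>
    simp [hi, hk, Matrix.mul_apply, Matrix.transpose_apply, Matrix.mulVec, dotProduct,
      mul_comm]

lemma gmatAux_col (d r : ℕ) (M : Matrix (Fin d) (Fin r) ℝ) (b : Fin r → ℝ)
    (x : Fin d → ℝ) (l : Fin r) :
    ∑ i : Fin (d + 1), gmatAux d r M b i l * (Fin.snoc x 1 : Fin (d + 1) → ℝ) i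
      = (Mᵀ.mulVec x + b) l := by
  rw [Fin.sum_univ_castSucc]
  simp [gmatAux, Matrix.mulVec, dotProduct, Matrix.transpose_apply]

lemma quad_eq (d r : ℕ) (M : Matrix (Fin d) (Fin r) ℝ) (b : Fin r → ℝ) (x : Fin d → ℝ) :
    ∑ i : Fin (d + 1), ∑ k : Fin (d + 1),
      affineMeasMatrixR d r M b i k *
        ((Fin.snoc x 1 : Fin (d + 1) → ℝ) i * (Fin.snoc x 1 : Fin (d + 1) → ℝ) k)
      = ∑ l : Fin r, ((Mᵀ.mulVec x + b) l) ^ 2 := by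
  set u : Fin (d + 1) → ℝ := (Fin.snoc x 1 : Fin (d + 1) → ℝ) with hu
  calc ∑ i : Fin (d + 1), ∑ k : Fin (d + 1), affineMeasMatrixR d r M b i k * (u i * u k)
      = ∑ i : Fin (d + 1), ∑ k : Fin (d + 1), ∑ l : Fin r,
          (gmatAux d r M b i l * u i) * (gmatAux d r M b k l * u k) := by
        refine Finset.sum_congr rfl fun i _ => Finset.sum_congr rfl fun k _ => ?_
        rw [affineMeasMatrixR_eq_sum, Finset.sum_mul]
        exact Finset.sum_congr rfl fun l _ => by ring
    _ = ∑ i : Fin (d + 1), ∑ l : Fin r, ∑ k : Fin (d + 1),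
          (gmatAux d r M b i l * u i) * (gmatAux d r M b k l * u k) :=
        Finset.sum_congr rfl fun i _ => by rw [Finset.sum_comm]
    _ = ∑ l : Fin r, ∑ i : Fin (d + 1), ∑ k : Fin (d + 1),
          (gmatAux d r M b i l * u i) * (gmatAux d r M b k l * u k) := by
        rw [Finset.sum_comm]
    _ = ∑ l : Fin r, (∑ i : Fin (d + 1), gmatAux d r M b i l * u i) *
          (∑ k : Fin (d + 1), gmatAux d r M b k l * u k) :=
        Finset.sum_congr rfl fun l _ => (Fintype.sum_mul_sum _ _).symm
    _ = ∑ l : Fin r, ((Mᵀ.mulVec x + b) l) ^ 2 := by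
        refine Finset.sum_congr rfl fun l _ => ?_
        rw [hu, gmatAux_col, sq]

lemma trace_expand {n : ℕ} (A Q : Matrix (Fin n) (Fin n) ℝ) :
    (Aᵀ * Q).trace = ∑ i : Fin n, ∑ k : Fin n, A i k * Q i k := by
  rw [Matrix.trace]
  simp only [Matrix.diag, Matrix.mul_apply, Matrix.transpose_apply]
  exact Finset.sum_comm

/-- `A = {(M_j, b_j)}_{j=1}^m` fails the generalized affine phase
retrieval property for ℝ^d iff there exists `Q ∈ ℝ^{(d+1)×(d+1)}` with `Qᵀ = Q`,
`Q_{d+1,d+1} = 0`, `rank Q ≤ 2`, `tr(A_jᵀ Q) = 0` for all `j`, and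
`Q_{1,d+1}² + ⋯ + Q_{d,d+1}² = 1`. -/
theorem gapr_fail_iff_exists_Q_real
    (r d m : ℕ) (hr : 1 ≤ r) (hd : 1 ≤ d) (hm : 1 ≤ m)
    (M : Fin m → Matrix (Fin d) (Fin r) ℝ) (b : Fin m → Fin r → ℝ) :
    ¬ Function.Injective (fun x : Fin d → ℝ => fun j : Fin m =>
        ∑ i : Fin r, ((M j)ᵀ.mulVec x + b j) i ^ 2)
    ↔ ∃ Q : Matrix (Fin (d + 1)) (Fin (d + 1)) ℝ,
        Qᵀ = Q ∧
        Q (Fin.last d) (Fin.last d) = 0 ∧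
        Q.rank ≤ 2 ∧
        (∀ j : Fin m, ((affineMeasMatrixR d r (M j) (b j))ᵀ * Q).trace = 0) ∧
        ∑ i : Fin d, Q i.castSucc (Fin.last d) ^ 2 = 1 := by
  constructor
  · -- forward direction
    intro hni
    rw [Function.not_injective_iff] at hni
    obtain ⟨x, y, hfeq, hxy⟩ := hni
    set t : ℝ := ∑ i : Fin d, (x i - y i) ^ 2 with ht
    have htpos : 0 < t := by
      rcases Function.ne_iff.mp hxy with ⟨i, hi⟩
      have h1 : (0 : ℝ) < (x i - y i) ^ 2 := by
        have : x i - y i ≠ 0 := sub_ne_zero.mpr hi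
        positivity
      refine lt_of_lt_of_le h1 ?_
      exact Finset.single_le_sum (fun i _ => sq_nonneg (x i - y i)) (Finset.mem_univ i)
    set c : ℝ := (Real.sqrt t)⁻¹ with hc
    have hsq : Real.sqrt t ≠ 0 := ne_of_gt (Real.sqrt_pos.mpr htpos)
    set u : Fin (d + 1) → ℝ := Fin.snoc x 1 with hu
    set v : Fin (d + 1) → ℝ := Fin.snoc y 1 with hv
    refine ⟨Matrix.of fun i k => c * (u i * u k - v i * v k), ?_, ?_, ?_, ?_, ?_⟩
    · ext i k
      simp only [Matrix.transpose_apply, Matrix.of_apply]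
      ring
    · simp [hu, hv, Fin.snoc_last]
    · -- rank ≤ 2
      have hle : LinearMap.range (Matrix.mulVecLin
            (Matrix.of fun i k => c * (u i * u k - v i * v k)))
          ≤ Submodule.span ℝ ({u, v} : Set (Fin (d + 1) → ℝ)) := by
        rintro w ⟨z, rfl⟩
        refine Submodule.mem_span_pair.mpr
          ⟨c * ∑ k, u k * z k, -(c * ∑ k, v k * z k), ?_⟩
        have hpoint : ∀ i, (c * ∑ k, u k * z k) * u i + (-(c * ∑ k, v k * z k)) * v i
            = ∑ k, (c * (u i * u k - v i * v k)) * z k := by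
          intro i
          simp only [Finset.mul_sum, neg_mul, Finset.sum_mul, ← Finset.sum_neg_distrib,
            ← Finset.sum_add_distrib]
          exact Finset.sum_congr rfl fun k _ => by ring
        funext i
        simp only [Matrix.mulVecLin_apply, Matrix.mulVec, dotProduct, Matrix.of_apply,
          Pi.add_apply, Pi.smul_apply, smul_eq_mul]
        exact hpoint i
      have h2 : Module.finrank ℝ
          ↥(Submodule.span ℝ ({u, v} : Set (Fin (d + 1) → ℝ))) ≤ 2 := by
        classical
        refine (finrank_span_le_card _).trans ?_
        simp only [Set.toFinset_insert, Set.toFinset_singleton]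
        exact (Finset.card_insert_le _ _).trans (by simp)
      exact le_trans (Submodule.finrank_mono hle) h2
    · -- traces vanish
      intro j
      rw [trace_expand]
      have h1 := quad_eq d r (M j) (b j) x
      have h2 := quad_eq d r (M j) (b j) y
      have h3 : (∑ l : Fin r, ((M j)ᵀ.mulVec x + b j) l ^ 2)
          = ∑ l : Fin r, ((M j)ᵀ.mulVec y + b j) l ^ 2 := congrFun hfeq j
      have h4 : ∑ i : Fin (d + 1), ∑ k : Fin (d + 1),
          affineMeasMatrixR d r (M j) (b j) i k *
            (Matrix.of fun i k => c * (u i * u k - v i * v k)) i k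
          = c * ((∑ i : Fin (d + 1), ∑ k : Fin (d + 1),
                affineMeasMatrixR d r (M j) (b j) i k * (u i * u k))
            - ∑ i : Fin (d + 1), ∑ k : Fin (d + 1),
                affineMeasMatrixR d r (M j) (b j) i k * (v i * v k)) := by
        rw [mul_sub, Finset.mul_sum, Finset.mul_sum, ← Finset.sum_sub_distrib]
        refine Finset.sum_congr rfl fun i _ => ?_
        rw [Finset.mul_sum, Finset.mul_sum, ← Finset.sum_sub_distrib]
        exact Finset.sum_congr rfl fun k _ => by simp only [Matrix.of_apply]; ring
      rw [h4, hu, hv, h1, h2, h3, sub_self, mul_zero]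
    · -- normalization
      have h5 : ∀ i : Fin d,
          (Matrix.of fun i k => c * (u i * u k - v i * v k)) i.castSucc (Fin.last d)
            = c * (x i - y i) := by
        intro i
        simp [hu, hv, Fin.snoc_castSucc, Fin.snoc_last]
      calc ∑ i : Fin d, (Matrix.of fun i k => c * (u i * u k - v i * v k))
              i.castSucc (Fin.last d) ^ 2
          = ∑ i : Fin d, c ^ 2 * (x i - y i) ^ 2 := by
            exact Finset.sum_congr rfl fun i _ => by rw [h5 i]; ring
        _ = c ^ 2 * t := by rw [ht, ← Finset.mul_sum]
        _ = 1 := by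
            rw [hc]
            rw [show ((Real.sqrt t)⁻¹) ^ 2 = ((Real.sqrt t) ^ 2)⁻¹ by
              rw [inv_pow]]
            rw [Real.sq_sqrt htpos.le]
            exact inv_mul_cancel₀ (ne_of_gt htpos)
  · -- backward direction
    rintro ⟨Q, hsym, hlast, hrank, htr, hnorm⟩
    have hsym' : ∀ i k, Q k i = Q i k := fun i k => congrFun (congrFun hsym i) k
    set q : Fin (d + 1) → ℝ := fun i => Q i (Fin.last d) with hq
    have hql : q (Fin.last d) = 0 := hlast
    have hs1 : ∑ i : Fin (d + 1), q i * q i = 1 := by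
      rw [Fin.sum_univ_castSucc]
      have := hnorm
      simp only [pow_two] at this
      simp [hql]
      exact this
    set p : Fin (d + 1) → ℝ := Q.mulVec q with hp
    have hpentry : ∀ k, p k = ∑ i : Fin (d + 1), Q k i * q i := by
      intro k; rw [hp]; rfl
    have hpl : p (Fin.last d) = 1 := by
      rw [hpentry]
      calc ∑ i : Fin (d + 1), Q (Fin.last d) i * q i
          = ∑ i : Fin (d + 1), q i * q i :=
            Finset.sum_congr rfl fun i _ => by rw [hsym' i (Fin.last d)]
        _ = 1 := hs1
    have hqne : q ≠ 0 := by
      intro h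
      rw [h] at hs1
      simp at hs1
    have hqmem : q ∈ LinearMap.range Q.mulVecLin := by
      refine ⟨Pi.single (Fin.last d) 1, ?_⟩
      funext i
      simp [Matrix.mulVecLin_apply, Matrix.mulVec_single, hq]
    have hpmem : p ∈ LinearMap.range Q.mulVecLin := ⟨q, rfl⟩
    have hind : LinearIndependent ℝ ![q, p] := by
      rw [LinearIndependent.pair_iff]
      intro s tt hst
      have h1 : s * q (Fin.last d) + tt * p (Fin.last d) = 0 := by
        have := congrFun hst (Fin.last d)
        simpa using this
      rw [hql, hpl] at h1
      have htt : tt = 0 := by linarith [h1]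
      subst htt
      simp only [zero_smul, add_zero] at hst
      have hs0 : s = 0 := by
        by_contra hs
        exact hqne (by
          funext i
          have := congrFun hst i
          simp only [Pi.smul_apply, smul_eq_mul, Pi.zero_apply] at this
          have := mul_eq_zero.mp this
          rcases this with h | h
          · exact absurd h hs
          · simpa using h)
      exact ⟨hs0, rfl⟩
    have hspan : LinearMap.range Q.mulVecLin
        = Submodule.span ℝ ({q, p} : Set (Fin (d + 1) → ℝ)) := by
      have hle : Submodule.span ℝ ({q, p} : Set (Fin (d + 1) → ℝ))
          ≤ LinearMap.range Q.mulVecLin := by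
        rw [Submodule.span_le]
        rintro w hw
        rcases hw with rfl | rfl
        · exact hqmem
        · exact hpmem
      refine (Submodule.eq_of_le_of_finrank_le hle ?_).symm
      have h2 : Module.finrank ℝ
          ↥(Submodule.span ℝ ({q, p} : Set (Fin (d + 1) → ℝ))) = 2 := by
        have h3 := finrank_span_eq_card hind
        have hrange : Set.range ![q, p] = ({q, p} : Set (Fin (d + 1) → ℝ)) := by
          simp [Matrix.range_cons, Matrix.range_empty]
          exact Set.pair_comm p q
        rw [hrange] at h3
        simpa using h3
      rw [h2]
      exact hrank
    set cc : ℝ := ∑ i : Fin (d + 1), q i * p i with hcc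
    have key : ∀ z : Fin (d + 1) → ℝ, ∀ i,
        Q.mulVec z i = ((∑ k, p k * z k) - cc * (∑ k, q k * z k)) * q i
          + (∑ k, q k * z k) * p i := by
      intro z
      have hz : Q.mulVec z ∈ Submodule.span ℝ ({q, p} : Set (Fin (d + 1) → ℝ)) := by
        rw [← hspan]; exact ⟨z, rfl⟩
      obtain ⟨a, b', hab⟩ := Submodule.mem_span_pair.mp hz
      -- evaluate at last coordinate
      have hzlast : Q.mulVec z (Fin.last d) = ∑ k, q k * z k := by
        simp only [Matrix.mulVec, dotProduct]
        exact Finset.sum_congr rfl fun k _ => by rw [hsym' k (Fin.last d)]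
      have hb' : b' = ∑ k, q k * z k := by
        have := congrFun hab (Fin.last d)
        simp only [Pi.add_apply, Pi.smul_apply, smul_eq_mul, hql, hpl, mul_zero, mul_one,
          zero_add] at this
        rw [this]; exact hzlast
      -- dot with q
      have hq_dot : ∑ i, q i * Q.mulVec z i = ∑ k, p k * z k := by
        simp only [Matrix.mulVec, dotProduct, Finset.mul_sum]
        rw [Finset.sum_comm]
        refine Finset.sum_congr rfl fun k _ => ?_
        rw [hpentry, Finset.sum_mul]
        exact Finset.sum_congr rfl fun i _ => by rw [hsym' i k]; ring
      have habi : ∀ i, a * q i + b' * p i = Q.mulVec z i := by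
        intro i
        have := congrFun hab i
        simpa using this
      have hq_dot2 : ∑ i, q i * Q.mulVec z i = a + b' * cc := by
        calc ∑ i, q i * Q.mulVec z i = ∑ i, q i * (a * q i + b' * p i) :=
              Finset.sum_congr rfl fun i _ => by rw [habi i]
          _ = a * (∑ i, q i * q i) + b' * (∑ i, q i * p i) := by
              rw [Finset.mul_sum, Finset.mul_sum, ← Finset.sum_add_distrib]
              exact Finset.sum_congr rfl fun i _ => by ring
          _ = a + b' * cc := by rw [hs1, ← hcc]; ring
      have ha : a = (∑ k, p k * z k) - cc * (∑ k, q k * z k) := by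
        have h6 := hq_dot
        rw [hq_dot2, hb'] at h6
        linarith [h6]
      intro i
      rw [← habi i, ha, hb']
    -- entrywise formula for Q
    have hQentry : ∀ i k, Q i k = (p k - cc * q k) * q i + q k * p i := by
      intro i k
      have h := key (Pi.single k 1) i
      have e1 : Q.mulVec (Pi.single k 1) i = Q i k := by
        simp [Matrix.mulVec_single]
      have e2 : ∑ j, p j * (Pi.single k 1 : Fin (d + 1) → ℝ) j = p k := by
        simp [Pi.single_apply, mul_ite]
      have e3 : ∑ j, q j * (Pi.single k 1 : Fin (d + 1) → ℝ) j = q k := by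
        simp [Pi.single_apply, mul_ite]
      rw [e1, e2, e3] at h
      exact h
    -- build the two lifted vectors
    set uu : Fin (d + 1) → ℝ := fun i => p i + ((1 - cc) / 2) * q i with huu
    set vv : Fin (d + 1) → ℝ := fun i => p i + ((-1 - cc) / 2) * q i with hvv
    have huv : ∀ i k, uu i * uu k - vv i * vv k = Q i k := by
      intro i k
      rw [hQentry i k, huu, hvv]
      ring
    have hul : uu (Fin.last d) = 1 := by rw [huu]; simp [hpl, hql]
    have hvl : vv (Fin.last d) = 1 := by rw [hvv]; simp [hpl, hql]
    set x : Fin d → ℝ := fun i => uu i.castSucc with hx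
    set y : Fin d → ℝ := fun i => vv i.castSucc with hy
    have hxu : (Fin.snoc x (1 : ℝ) : Fin (d + 1) → ℝ) = uu := by
      funext i
      refine Fin.lastCases ?_ (fun i => ?_) i
      · rw [Fin.snoc_last, hul]
      · rw [Fin.snoc_castSucc]
    have hyv : (Fin.snoc y (1 : ℝ) : Fin (d + 1) → ℝ) = vv := by
      funext i
      refine Fin.lastCases ?_ (fun i => ?_) i
      · rw [Fin.snoc_last, hvl]
      · rw [Fin.snoc_castSucc]
    have hxy : x ≠ y := by
      intro h
      have hq0 : ∀ i : Fin d, q i.castSucc = 0 := by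
        intro i
        have h7 := congrFun h i
        rw [hx, hy] at h7
        simp only [huu, hvv] at h7
        linarith [h7]
      have h8 : (1 : ℝ) = 0 := by
        rw [← hnorm]
        refine Finset.sum_eq_zero fun i _ => ?_
        have : Q i.castSucc (Fin.last d) = q i.castSucc := rfl
        rw [this, hq0 i]
        ring
      norm_num at h8
    intro hinj
    have hfeq : (fun j : Fin m => ∑ i : Fin r, ((M j)ᵀ.mulVec x + b j) i ^ 2)
        = fun j : Fin m => ∑ i : Fin r, ((M j)ᵀ.mulVec y + b j) i ^ 2 := by
      funext j
      have h0 := htr j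
      rw [trace_expand] at h0
      have h1 := quad_eq d r (M j) (b j) x
      have h2 := quad_eq d r (M j) (b j) y
      rw [hxu] at h1
      rw [hyv] at h2
      have h3 : (∑ i : Fin (d + 1), ∑ k : Fin (d + 1),
            affineMeasMatrixR d r (M j) (b j) i k * (uu i * uu k))
          - (∑ i : Fin (d + 1), ∑ k : Fin (d + 1),
            affineMeasMatrixR d r (M j) (b j) i k * (vv i * vv k)) = 0 := by
        rw [← h0, ← Finset.sum_sub_distrib]
        refine Finset.sum_congr rfl fun i _ => ?_
        rw [← Finset.sum_sub_distrib]
        refine Finset.sum_congr rfl fun k _ => ?_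
        rw [← huv i k]
        ring
      linarith [h1, h2, h3]
    exact hxy (hinj hfeq)
end

section
/- Let r, d, m ≥ 1 and let A = {(M_j, b_j)}_{j=1}^m with M_j ∈ ℂ^{d×r} and b_j ∈ ℂ^r. Then the map M_A : ℂ^d → ℝ^m defined by M_A(x) = (‖M_1*x + b_1‖², …, ‖M_m*x + b_m‖²) is injective on ℂ^d if and only if for every u ∈ ℂ^d and every nonzero v ∈ ℂ^d there exists j with 1 ≤ j ≤ m such that Re(u* M_j M_j* v + (M_j b_j)* v) ≠ 0. -/
open Matrix
lemma sq_diff (w q : ℂ) : ‖w + q/2‖ ^ 2 - ‖w - q/2‖ ^ 2 = 2 * ((starRingEnd ℂ) w * q).re := by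
  simp only [← Complex.normSq_eq_norm_sq, Complex.normSq_apply,
    Complex.add_re, Complex.add_im, Complex.sub_re, Complex.sub_im, Complex.div_re,
    Complex.div_im, Complex.mul_re, Complex.conj_re, Complex.conj_im]
  norm_num
  ring

lemma key (r d : ℕ) (M : Matrix (Fin d) (Fin r) ℂ) (b : Fin r → ℂ) (u v : Fin d → ℂ) :
    (∑ i : Fin r, ‖(Mᴴ.mulVec (u + (2⁻¹:ℂ) • v) + b) i‖ ^ 2)
      - (∑ i : Fin r, ‖(Mᴴ.mulVec (u - (2⁻¹:ℂ) • v) + b) i‖ ^ 2)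
    = 2 * (star u ⬝ᵥ (M * Mᴴ).mulVec v + star (M.mulVec b) ⬝ᵥ v).re := by
  have h1 : ∀ i : Fin r,
      (Mᴴ.mulVec (u + (2⁻¹:ℂ) • v) + b) i
        = ((Mᴴ.mulVec u + b) i) + (Mᴴ.mulVec v i) / 2 := by
    intro i
    simp [Matrix.mulVec_add, Matrix.mulVec_smul, Pi.add_apply, Pi.smul_apply, smul_eq_mul]
    ring
  have h2 : ∀ i : Fin r,
      (Mᴴ.mulVec (u - (2⁻¹:ℂ) • v) + b) i
        = ((Mᴴ.mulVec u + b) i) - (Mᴴ.mulVec v i) / 2 := by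
    intro i
    rw [sub_eq_add_neg, ← neg_smul]
    simp [Matrix.mulVec_add, Matrix.mulVec_smul, Matrix.mulVec_neg, Pi.add_apply, Pi.smul_apply,
      Pi.neg_apply, smul_eq_mul]
    ring
  have hsum : star u ⬝ᵥ (M * Mᴴ).mulVec v + star (M.mulVec b) ⬝ᵥ v
      = ∑ i : Fin r, (starRingEnd ℂ) ((Mᴴ.mulVec u + b) i) * (Mᴴ.mulVec v i) := by
    have e1 : star u ⬝ᵥ (M * Mᴴ).mulVec v = star (Mᴴ.mulVec u) ⬝ᵥ (Mᴴ.mulVec v) := by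
      rw [Matrix.star_mulVec, Matrix.conjTranspose_conjTranspose, ← Matrix.dotProduct_mulVec,
        Matrix.mulVec_mulVec]
    have e2 : star (M.mulVec b) ⬝ᵥ v = star b ⬝ᵥ Mᴴ.mulVec v := by
      rw [Matrix.star_mulVec, ← Matrix.dotProduct_mulVec]
    rw [e1, e2]
    simp [dotProduct, Pi.star_apply, Pi.add_apply, map_add, add_mul,
      Finset.sum_add_distrib]
  rw [← Finset.sum_sub_distrib]
  calc (∑ i : Fin r, (‖(Mᴴ.mulVec (u + (2⁻¹:ℂ) • v) + b) i‖ ^ 2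
        - ‖(Mᴴ.mulVec (u - (2⁻¹:ℂ) • v) + b) i‖ ^ 2))
      = ∑ i : Fin r, 2 * ((starRingEnd ℂ) ((Mᴴ.mulVec u + b) i) * (Mᴴ.mulVec v i)).re := by
        refine Finset.sum_congr rfl fun i _ => ?_
        rw [h1 i, h2 i, sq_diff]
    _ = 2 * (star u ⬝ᵥ (M * Mᴴ).mulVec v + star (M.mulVec b) ⬝ᵥ v).re := by
        rw [hsum, ← Finset.mul_sum, Complex.re_sum]

/-- The measurement map `M_A(x) = (‖M_j*x + b_j‖²)_{j=1}^m` is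
injective on ℂ^d iff for all `u` and all nonzero `v` there is `j` with
`Re(u* M_j M_j* v + (M_j b_j)* v) ≠ 0`. -/
theorem gapr_iff_complex
    (r d m : ℕ) (hr : 1 ≤ r) (hd : 1 ≤ d) (hm : 1 ≤ m)
    (M : Fin m → Matrix (Fin d) (Fin r) ℂ) (b : Fin m → Fin r → ℂ) :
    Function.Injective (fun x : Fin d → ℂ => fun j : Fin m =>
      ∑ i : Fin r, ‖((M j)ᴴ.mulVec x + b j) i‖ ^ 2)
    ↔ ∀ u v : Fin d → ℂ, v ≠ 0 → ∃ j : Fin m,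
        (star u ⬝ᵥ (M j * (M j)ᴴ).mulVec v
          + star ((M j).mulVec (b j)) ⬝ᵥ v).re ≠ 0 := by
  constructor
  · intro hinj u v hv
    by_contra h
    push_neg at h
    have heq : (u + (2⁻¹:ℂ) • v) = (u - (2⁻¹:ℂ) • v) := by
      apply hinj
      funext j
      have hk := key r d (M j) (b j) u v
      rw [h j, mul_zero, sub_eq_zero] at hk
      exact hk
    apply hv
    have hz : (u + (2⁻¹:ℂ) • v) - (u - (2⁻¹:ℂ) • v) = 0 := by rw [heq]; simp
    have h1 : (2⁻¹:ℂ) • v + (2⁻¹:ℂ) • v = 0 := by rw [← hz]; abel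
    have h2 : ((2⁻¹:ℂ) + 2⁻¹) • v = 0 := by rw [add_smul]; exact h1
    simpa using h2
  · intro h x y hxy
    by_contra hne
    have hv : x - y ≠ 0 := sub_ne_zero.mpr hne
    obtain ⟨j, hj⟩ := h ((2⁻¹:ℂ) • (x + y)) (x - y) hv
    apply hj
    have hk := key r d (M j) (b j) ((2⁻¹:ℂ) • (x + y)) (x - y)
    have hx : (2⁻¹:ℂ) • (x + y) + (2⁻¹:ℂ) • (x - y) = x := by
      rw [← smul_add]
      have : (x + y) + (x - y) = (2:ℂ) • x := by
        rw [two_smul]; abel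
      rw [this, smul_smul]; norm_num
    have hy : (2⁻¹:ℂ) • (x + y) - (2⁻¹:ℂ) • (x - y) = y := by
      rw [← smul_sub]
      have : (x + y) - (x - y) = (2:ℂ) • y := by
        rw [two_smul]; abel
      rw [this, smul_smul]; norm_num
    rw [hx, hy] at hk
    have h0 := congrFun hxy j
    simp only at h0
    rw [h0, sub_self] at hk
    linarith [hk]
end

section
/- Let r, d, m ≥ 1 and let A = {(M_j, b_j)}_{j=1}^m with M_j ∈ ℂ^{d×r} and b_j ∈ ℂ^r. Viewing the map M_A(x) = (‖M_1*x + b_1‖², …, ‖M_m*x + b_m‖²) as a map from ℝ^{2d} to ℝ^m via the standard identification ℂ^d ≅ ℝ^{2d}, the following are equivalent: (a) M_A is injective on ℂ^d; (b) for every x ∈ ℝ^{2d}, the (Fréchet) derivative of M_A : ℝ^{2d} → ℝ^m at x is an injective linear map (equivalently, the real Jacobian of M_A has rank 2d at every point). -/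
open Matrix

noncomputable def nD (c : ℂ) : ℂ →L[ℝ] ℝ :=
  (2*c.re) • Complex.reCLM + (2*c.im) • Complex.imCLM

lemma nD_apply (c v : ℂ) : nD c v = 2*c.re*v.re + 2*c.im*v.im := by
  simp [nD]

lemma hasFDerivAt_normSq (c : ℂ) : HasFDerivAt Complex.normSq (nD c) c := by
  have hre : HasFDerivAt (fun z : ℂ => z.re) Complex.reCLM c := Complex.reCLM.hasFDerivAt
  have him : HasFDerivAt (fun z : ℂ => z.im) Complex.imCLM c := Complex.imCLM.hasFDerivAt
  have h := (hre.fun_mul hre).fun_add (him.fun_mul him)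
  have heq : (fun z : ℂ => z.re * z.re + z.im * z.im) = Complex.normSq := by
    funext z; simp [Complex.normSq_apply]
  rw [heq] at h
  refine h.congr_fderiv ?_
  ext v
  simp [nD_apply, Complex.mul_re]
  ring

noncomputable def TT {d r : ℕ} (A : Matrix (Fin r) (Fin d) ℂ) (i : Fin r) :
    (Fin d → ℂ) →L[ℝ] ℂ :=
  LinearMap.toContinuousLinearMap (((LinearMap.proj i).comp A.mulVecLin).restrictScalars ℝ)

lemma TT_apply {d r : ℕ} (A : Matrix (Fin r) (Fin d) ℂ) (i : Fin r) (v : Fin d → ℂ) :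
    TT A i v = A.mulVec v i := rfl

noncomputable def LD {d r m : ℕ} (M : Fin m → Matrix (Fin d) (Fin r) ℂ)
    (b : Fin m → Fin r → ℂ) (z : Fin d → ℂ) : (Fin d → ℂ) →L[ℝ] (Fin m → ℝ) :=
  ContinuousLinearMap.pi (fun j =>
    ∑ i : Fin r, (nD (((M j)ᴴ.mulVec z + b j) i)).comp (TT (M j)ᴴ i))

lemma hasFDerivAt_f {d r m : ℕ} (M : Fin m → Matrix (Fin d) (Fin r) ℂ)
    (b : Fin m → Fin r → ℂ) (z : Fin d → ℂ) :
    HasFDerivAt (fun y : Fin d → ℂ => fun j : Fin m =>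
      ∑ i : Fin r, Complex.normSq (((M j)ᴴ.mulVec y + b j) i)) (LD M b z) z := by
  apply hasFDerivAt_pi.2
  intro j
  apply HasFDerivAt.fun_sum
  intro i _
  have haff : HasFDerivAt (fun y : Fin d → ℂ => ((M j)ᴴ.mulVec y + b j) i)
      (TT (M j)ᴴ i) z := by
    have := (TT (M j)ᴴ i).hasFDerivAt (x := z)
    have h2 := this.add_const (b j i)
    exact h2.congr_fderiv rfl
  have hn := hasFDerivAt_normSq (((M j)ᴴ.mulVec z + b j) i)
  exact hn.comp z haff

lemma key_scalar (a a' c : ℂ) :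
    Complex.normSq (a + c) - Complex.normSq (a' + c)
      = nD ((1/2 : ℝ) • (a + a') + c) (a - a') := by
  simp [nD_apply, Complex.normSq_apply, Complex.real_smul, Complex.mul_re]
  ring

lemma mulVec_real_smul {d r : ℕ} (A : Matrix (Fin r) (Fin d) ℂ) (t : ℝ) (v : Fin d → ℂ) :
    A.mulVec (t • v) = t • A.mulVec v := by
  have : (t • v) = (t : ℂ) • v := by funext i; simp [Complex.real_smul]
  rw [this, Matrix.mulVec_smul]
  funext i; simp [Complex.real_smul]

lemma key_identity {d r m : ℕ} (M : Fin m → Matrix (Fin d) (Fin r) ℂ)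
    (b : Fin m → Fin r → ℂ) (x y : Fin d → ℂ) (j : Fin m) :
    (∑ i : Fin r, Complex.normSq (((M j)ᴴ.mulVec x + b j) i))
      - (∑ i : Fin r, Complex.normSq (((M j)ᴴ.mulVec y + b j) i))
      = LD M b ((1/2 : ℝ) • (x + y)) (x - y) j := by
  have hld : LD M b ((1/2 : ℝ) • (x + y)) (x - y) j
      = ∑ i : Fin r, nD (((M j)ᴴ.mulVec ((1/2 : ℝ) • (x + y)) + b j) i)
          ((M j)ᴴ.mulVec (x - y) i) := by
    simp [LD, ContinuousLinearMap.pi_apply, ContinuousLinearMap.sum_apply, TT_apply]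
  rw [hld, ← Finset.sum_sub_distrib]
  apply Finset.sum_congr rfl
  intro i _
  have h1 : ((M j)ᴴ.mulVec ((1/2 : ℝ) • (x + y)) + b j) i
      = (1/2 : ℝ) • ((M j)ᴴ.mulVec x i + (M j)ᴴ.mulVec y i) + b j i := by
    simp [mulVec_real_smul, Matrix.mulVec_add]
  have h2 : (M j)ᴴ.mulVec (x - y) i = (M j)ᴴ.mulVec x i - (M j)ᴴ.mulVec y i := by
    simp [Matrix.mulVec_sub]
  rw [h1, h2]
  simpa using key_scalar ((M j)ᴴ.mulVec x i) ((M j)ᴴ.mulVec y i) (b j i)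

/-- Viewing the measurement map `M_A(x) = (‖M_j*x + b_j‖²)_j` as a
real-differentiable map on `ℂ^d ≅ ℝ^{2d}`, it is injective iff its real Fréchet
derivative is injective at every point (i.e. the real Jacobian has rank `2d`
everywhere). -/
theorem gapr_iff_jacobian_complex
    (r d m : ℕ) (hr : 1 ≤ r) (hd : 1 ≤ d) (hm : 1 ≤ m)
    (M : Fin m → Matrix (Fin d) (Fin r) ℂ) (b : Fin m → Fin r → ℂ) :
    Function.Injective (fun x : Fin d → ℂ => fun j : Fin m =>
      ∑ i : Fin r, ‖((M j)ᴴ.mulVec x + b j) i‖ ^ 2)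
    ↔ ∀ x : Fin d → ℂ,
        Function.Injective
          (fderiv ℝ (fun y : Fin d → ℂ => fun j : Fin m =>
            ∑ i : Fin r, ‖((M j)ᴴ.mulVec y + b j) i‖ ^ 2) x) := by
  have hfeq : (fun y : Fin d → ℂ => fun j : Fin m =>
      ∑ i : Fin r, ‖((M j)ᴴ.mulVec y + b j) i‖ ^ 2)
      = (fun y : Fin d → ℂ => fun j : Fin m =>
      ∑ i : Fin r, Complex.normSq (((M j)ᴴ.mulVec y + b j) i)) := by
    funext y j
    refine Finset.sum_congr rfl fun i _ => ?_
    rw [Complex.sq_norm]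
  rw [hfeq]
  have hfd : ∀ z : Fin d → ℂ, fderiv ℝ (fun y : Fin d → ℂ => fun j : Fin m =>
      ∑ i : Fin r, Complex.normSq (((M j)ᴴ.mulVec y + b j) i)) z = LD M b z :=
    fun z => (hasFDerivAt_f M b z).fderiv
  constructor
  · intro hinj z
    rw [hfd z]
    intro v w hvw
    have hz : (1/2 : ℝ) • ((z + (1/2 : ℝ) • (v - w)) + (z - (1/2 : ℝ) • (v - w))) = z := by
      module
    have hsub : (z + (1/2 : ℝ) • (v - w)) - (z - (1/2 : ℝ) • (v - w)) = v - w := by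
      module
    have hkey := fun j => key_identity M b (z + (1/2 : ℝ) • (v - w)) (z - (1/2 : ℝ) • (v - w)) j
    have hLD0 : LD M b z (v - w) = 0 := by
      rw [map_sub, hvw, sub_self]
    have hfxy : (fun j : Fin m =>
        ∑ i : Fin r, Complex.normSq (((M j)ᴴ.mulVec (z + (1/2 : ℝ) • (v - w)) + b j) i))
        = (fun j : Fin m =>
        ∑ i : Fin r, Complex.normSq (((M j)ᴴ.mulVec (z - (1/2 : ℝ) • (v - w)) + b j) i)) := by
      funext j
      have := hkey j
      rw [hsub, hz] at this
      have h0 : LD M b z (v - w) j = 0 := by rw [hLD0]; rfl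
      linarith [this, h0]
    have := hinj hfxy
    have hvw0 : v - w = 0 := by
      have h2 : (z + (1/2 : ℝ) • (v - w)) - (z - (1/2 : ℝ) • (v - w)) = 0 := by
        rw [this]; simp
      rw [hsub] at h2; exact h2
    exact sub_eq_zero.mp hvw0
  · intro hder x y hxy
    have hinj := hder ((1/2 : ℝ) • (x + y))
    rw [hfd] at hinj
    have h0 : LD M b ((1/2 : ℝ) • (x + y)) (x - y) = 0 := by
      funext j
      have := key_identity M b x y j
      have hx : (∑ i : Fin r, Complex.normSq (((M j)ᴴ.mulVec x + b j) i))
          = (∑ i : Fin r, Complex.normSq (((M j)ᴴ.mulVec y + b j) i)) := congrFun hxy j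
      rw [hx, sub_self] at this
      exact (this.symm)
    have : x - y = 0 := by
      apply hinj
      rw [h0, map_zero]
    exact sub_eq_zero.mp this
end

section
/- Let r, d ≥ 1 and let m ≥ 2d + ⌊d/r⌋ + ε_{d,r}, where ε_{d,r} = 0 if r divides d and ε_{d,r} = 1 otherwise. Then there exists a collection A = {(M_j, b_j)}_{j=1}^m with M_j ∈ ℂ^{d×r} and b_j ∈ ℂ^r which has the generalized affine phase retrieval property for ℂ^d. -/
open Matrix

namespace GAPRaux

noncomputable def P (r d : ℕ) (t : ℕ) : Matrix (Fin d) (Fin r) ℂ :=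
  fun k i => if (k : ℕ) = t * r + (i : ℕ) then 1 else 0

noncomputable def tj (r d : ℕ) (n : ℕ) : ℕ :=
  if n < d then n / r else if n < 2 * d then (n - d) / r else n - 2 * d

noncomputable def bj (r d : ℕ) (n : ℕ) : Fin r → ℂ := fun i =>
  if n < d then (if (i : ℕ) = n % r then 1 else 0)
  else if n < 2 * d then (if (i : ℕ) = (n - d) % r then Complex.I else 0)
  else 0

lemma P_eval (r d : ℕ) (x : Fin d → ℂ) (t : ℕ) (i : Fin r) :
    ((P r d t)ᴴ.mulVec x) i
      = if h : t * r + (i : ℕ) < d then x ⟨t * r + (i : ℕ), h⟩ else 0 := by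
  simp only [Matrix.mulVec, Matrix.conjTranspose_apply, dotProduct, P]
  split
  · rename_i h
    rw [Finset.sum_eq_single (⟨t * r + (i : ℕ), h⟩ : Fin d)]
    · simp
    · intro k _ hk
      have : (k : ℕ) ≠ t * r + (i : ℕ) := by
        intro hc; apply hk; exact Fin.ext hc
      simp [this]
    · simp
  · rename_i h
    apply Finset.sum_eq_zero
    intro k _
    have : (k : ℕ) ≠ t * r + (i : ℕ) := by
      have := k.isLt; omega
    simp [this]

lemma sum_shift (r d : ℕ) (x : Fin d → ℂ) (t : ℕ) (c : ℂ) (p : ℕ) (hp : p < r) :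
    ∑ i : Fin r, ‖((P r d t)ᴴ.mulVec x) i + (if (i : ℕ) = p then c else 0)‖ ^ 2
      = (∑ i : Fin r, ‖((P r d t)ᴴ.mulVec x) i‖ ^ 2)
        - ‖((P r d t)ᴴ.mulVec x) ⟨p, hp⟩‖ ^ 2
        + ‖((P r d t)ᴴ.mulVec x) ⟨p, hp⟩ + c‖ ^ 2 := by
  set v := (P r d t)ᴴ.mulVec x with hv
  have hmem : (⟨p, hp⟩ : Fin r) ∈ Finset.univ := Finset.mem_univ _
  have e1 := Finset.sum_erase_add Finset.univ
    (fun i : Fin r => ‖v i + (if (i : ℕ) = p then c else 0)‖ ^ 2) hmem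
  have e2 := Finset.sum_erase_add Finset.univ (fun i : Fin r => ‖v i‖ ^ 2) hmem
  have h1 : ∀ i ∈ Finset.univ.erase (⟨p, hp⟩ : Fin r),
      ‖v i + (if (i : ℕ) = p then c else 0)‖ ^ 2 = ‖v i‖ ^ 2 := by
    intro i hi
    have : (i : ℕ) ≠ p := by
      intro hc
      exact (Finset.mem_erase.mp hi).1 (Fin.ext hc)
    simp [this]
  rw [Finset.sum_congr rfl h1] at e1
  simp only [if_true] at e1 e2
  linarith [e1, e2]

lemma norm_sq_eq (z : ℂ) : ‖z‖ ^ 2 = z.re ^ 2 + z.im ^ 2 := by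
  rw [Complex.sq_norm, Complex.normSq_apply]; ring

lemma norm_sq_add_one (z : ℂ) : ‖z + 1‖ ^ 2 = ‖z‖ ^ 2 + 2 * z.re + 1 := by
  rw [norm_sq_eq, norm_sq_eq]
  simp [Complex.add_re, Complex.add_im]
  ring

lemma norm_sq_add_I (z : ℂ) : ‖z + Complex.I‖ ^ 2 = ‖z‖ ^ 2 + 2 * z.im + 1 := by
  rw [norm_sq_eq, norm_sq_eq]
  simp [Complex.add_re, Complex.add_im]
  ring

end GAPRaux

open GAPRaux in
/-- For `m ≥ 2d + ⌊d/r⌋ + ε_{d,r}` (with `ε_{d,r} = 0` if `r ∣ d` and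
`1` otherwise) there exist measurements `{(M_j, b_j)}_{j=1}^m ⊂ ℂ^{d×r} × ℂ^r`
having the generalized affine phase retrieval property for ℂ^d. -/
theorem gapr_exists_complex
    (r d m : ℕ) (hr : 1 ≤ r) (hd : 1 ≤ d)
    (hm : 2 * d + d / r + (if r ∣ d then 0 else 1) ≤ m) :
    ∃ (M : Fin m → Matrix (Fin d) (Fin r) ℂ) (b : Fin m → Fin r → ℂ),
      Function.Injective (fun x : Fin d → ℂ => fun j : Fin m =>
        ∑ i : Fin r, ‖((M j)ᴴ.mulVec x + b j) i‖ ^ 2) := by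
  classical
  have hm' : 2 * d + d / r ≤ m := le_trans (Nat.le_add_right _ _) hm
  refine ⟨fun j => P r d (tj r d (j : ℕ)), fun j => bj r d (j : ℕ), ?_⟩
  intro x y hxy
  have hxy' : ∀ j : Fin m,
      ∑ i : Fin r, ‖((P r d (tj r d (j : ℕ)))ᴴ.mulVec x + bj r d (j : ℕ)) i‖ ^ 2
        = ∑ i : Fin r, ‖((P r d (tj r d (j : ℕ)))ᴴ.mulVec y + bj r d (j : ℕ)) i‖ ^ 2 :=
    fun j => congrFun hxy j
  -- block sums agree
  have hblock : ∀ t : ℕ, 2 * d + t < m →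
      (∑ i : Fin r, ‖((P r d t)ᴴ.mulVec x) i‖ ^ 2)
        = ∑ i : Fin r, ‖((P r d t)ᴴ.mulVec y) i‖ ^ 2 := by
    intro t ht
    have := hxy' ⟨2 * d + t, ht⟩
    have h1 : ¬ (2 * d + t < d) := by omega
    have h2 : ¬ (2 * d + t < 2 * d) := by omega
    simp only [tj, bj, Fin.val_mk, h1, h2, if_false, Pi.add_apply, add_zero,
      Nat.add_sub_cancel_left] at this
    exact this
  -- the block containing each coordinate is among the measurements
  have hkm : ∀ k : ℕ, k < d → 2 * d + k / r < m := by
    intro k hk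
    by_cases hdvd : r ∣ d
    · rw [if_pos hdvd, add_zero] at hm
      exact lt_of_lt_of_le (Nat.add_lt_add_left
        (Nat.div_lt_div_of_lt_of_dvd hdvd hk) (2 * d)) hm
    · rw [if_neg hdvd] at hm
      have h1 : k / r ≤ d / r := Nat.div_le_div_right (le_of_lt hk)
      calc 2 * d + k / r < 2 * d + (d / r + 1) :=
            Nat.add_lt_add_left (Nat.lt_succ_of_le h1) (2 * d)
        _ = 2 * d + d / r + 1 := by rw [add_assoc]
        _ ≤ m := hm
  have hsel : ∀ (z : Fin d → ℂ) (k : Fin d),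
      ((P r d ((k : ℕ) / r))ᴴ.mulVec z) ⟨(k : ℕ) % r, Nat.mod_lt _ hr⟩ = z k := by
    intro z k
    rw [P_eval]
    have hkd : (k : ℕ) / r * r + (k : ℕ) % r = (k : ℕ) := by
      rw [mul_comm]; exact Nat.div_add_mod _ _
    have hlt : (k : ℕ) / r * r + (k : ℕ) % r < d := by rw [hkd]; exact k.isLt
    rw [dif_pos hlt]
    congr 1
    exact Fin.ext hkd
  -- real parts agree
  have hRe : ∀ k : Fin d, (x k).re = (y k).re := by
    intro k
    have hk : (k : ℕ) < d := k.isLt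
    have hjlt : (k : ℕ) < m :=
      lt_of_lt_of_le (by omega : (k : ℕ) < 2 * d)
        (le_trans (Nat.le_add_right _ _) hm')
    have hmeas := hxy' ⟨(k : ℕ), hjlt⟩
    simp only [tj, bj, Fin.val_mk, if_pos hk, Pi.add_apply] at hmeas
    rw [sum_shift r d x ((k : ℕ) / r) 1 ((k : ℕ) % r) (Nat.mod_lt _ hr),
      sum_shift r d y ((k : ℕ) / r) 1 ((k : ℕ) % r) (Nat.mod_lt _ hr),
      hsel x k, hsel y k, hblock ((k : ℕ) / r) (hkm _ hk),
      norm_sq_add_one (x k), norm_sq_add_one (y k),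
      norm_sq_eq (x k), norm_sq_eq (y k)] at hmeas
    linarith [hmeas]
  -- imaginary parts agree
  have hIm : ∀ k : Fin d, (x k).im = (y k).im := by
    intro k
    have hk : (k : ℕ) < d := k.isLt
    have hjlt : d + (k : ℕ) < m :=
      lt_of_lt_of_le (by omega : d + (k : ℕ) < 2 * d)
        (le_trans (Nat.le_add_right _ _) hm')
    have hmeas := hxy' ⟨d + (k : ℕ), hjlt⟩
    have h1 : ¬ (d + (k : ℕ) < d) := by omega
    have h2 : d + (k : ℕ) < 2 * d := by omega
    have h3 : d + (k : ℕ) - d = (k : ℕ) := by omega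
    simp only [tj, bj, Fin.val_mk, h1, if_false, if_pos h2, h3, Pi.add_apply] at hmeas
    rw [sum_shift r d x ((k : ℕ) / r) Complex.I ((k : ℕ) % r) (Nat.mod_lt _ hr),
      sum_shift r d y ((k : ℕ) / r) Complex.I ((k : ℕ) % r) (Nat.mod_lt _ hr),
      hsel x k, hsel y k, hblock ((k : ℕ) / r) (hkm _ hk),
      norm_sq_add_I (x k), norm_sq_add_I (y k),
      norm_sq_eq (x k), norm_sq_eq (y k)] at hmeas
    linarith [hmeas]
  funext k
  exact Complex.ext (hRe k) (hIm k)
end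

section
/- Let r, d, m ≥ 1 and let A = {(M_j, b_j)}_{j=1}^m with M_j ∈ ℂ^{d×r} and b_j ∈ ℂ^r. For each j define the (d+1)×(d+1) Hermitian matrix A_j with block form A_j = [[M_j M_j*, M_j b_j], [(M_j b_j)*, b_j* b_j]]. Then A does NOT have the generalized affine phase retrieval property for ℂ^d if and only if there exists a matrix Q ∈ ℂ^{(d+1)×(d+1)} satisfying: Q* = Q, Q_{d+1,d+1} = 0, rank(Q) ≤ 2, tr(A_j* Q) = 0 for all j = 1, …, m, and Q_{1,d+1}·Q_{d+1,1} + Q_{2,d+1}·Q_{d+1,2} + ⋯ + Q_{d,d+1}·Q_{d+1,d} = 1. -/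
open Matrix

/-- The `(d+1)×(d+1)` Hermitian matrix
`A = [[M M*, M b], [(M b)*, b* b]]` associated with `(M, b) ∈ ℂ^{d×r} × ℂ^r`. -/
noncomputable def affineMeasMatrixC (d r : ℕ) (M : Matrix (Fin d) (Fin r) ℂ) (b : Fin r → ℂ) :
    Matrix (Fin (d + 1)) (Fin (d + 1)) ℂ :=
  Matrix.of fun i k =>
    if hi : (i : ℕ) < d then
      if hk : (k : ℕ) < d then (M * Mᴴ) ⟨i, hi⟩ ⟨k, hk⟩
      else M.mulVec b ⟨i, hi⟩
    else
      if hk : (k : ℕ) < d then star (M.mulVec b ⟨k, hk⟩)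
      else star b ⬝ᵥ b

open Complex

section helpers
variable {d r : ℕ} (M : Matrix (Fin d) (Fin r) ℂ) (b : Fin r → ℂ)

lemma amE1 (i k : Fin d) :
    affineMeasMatrixC d r M b i.castSucc k.castSucc = (M * Mᴴ) i k := by
  simp [affineMeasMatrixC, i.isLt, k.isLt]

lemma amE2 (i : Fin d) :
    affineMeasMatrixC d r M b i.castSucc (Fin.last d) = M.mulVec b i := by
  simp [affineMeasMatrixC, i.isLt]

lemma amE3 (k : Fin d) :
    affineMeasMatrixC d r M b (Fin.last d) k.castSucc = star (M.mulVec b k) := by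
  simp [affineMeasMatrixC, k.isLt]

lemma amE4 :
    affineMeasMatrixC d r M b (Fin.last d) (Fin.last d) = star b ⬝ᵥ b := by
  simp [affineMeasMatrixC]

noncomputable def quadC {n : ℕ} (A : Matrix (Fin n) (Fin n) ℂ) (z : Fin n → ℂ) : ℂ :=
  star z ⬝ᵥ A *ᵥ z

lemma quad_snoc (x : Fin d → ℂ) :
    quadC (affineMeasMatrixC d r M b) (Fin.snoc x 1)
      = star x ⬝ᵥ ((M * Mᴴ) *ᵥ x) + star x ⬝ᵥ (M *ᵥ b)
        + star (M *ᵥ b) ⬝ᵥ x + star b ⬝ᵥ b := by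
  set A := affineMeasMatrixC d r M b with hA
  have hz : ∀ i : Fin d, (Fin.snoc x 1 : Fin (d+1) → ℂ) i.castSucc = x i :=
    fun i => Fin.snoc_castSucc _ _ _
  have hzl : (Fin.snoc x 1 : Fin (d+1) → ℂ) (Fin.last d) = 1 := Fin.snoc_last _ _
  have hmv : ∀ i : Fin (d+1), (A *ᵥ (Fin.snoc x 1)) i
      = ∑ k : Fin d, A i k.castSucc * x k + A i (Fin.last d) := by
    intro i
    rw [mulVec, dotProduct, Fin.sum_univ_castSucc]
    simp [hz, hzl]
  rw [quadC, dotProduct, Fin.sum_univ_castSucc]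
  simp only [hmv, Pi.star_apply, hz, hzl, star_one, one_mul]
  rw [hA]
  simp only [amE1, amE2, amE3, amE4, mul_add, Finset.sum_add_distrib]
  simp only [dotProduct, mulVec, Pi.star_apply]
  ring

lemma meas_eq_quad (x : Fin d → ℂ) :
    ((∑ i : Fin r, ‖(Mᴴ.mulVec x + b) i‖ ^ 2 : ℝ) : ℂ)
      = quadC (affineMeasMatrixC d r M b) (Fin.snoc x 1) := by
  rw [quad_snoc]
  have h1 : ((∑ i : Fin r, ‖(Mᴴ.mulVec x + b) i‖ ^ 2 : ℝ) : ℂ)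
      = star (Mᴴ *ᵥ x + b) ⬝ᵥ (Mᴴ *ᵥ x + b) := by
    rw [Complex.ofReal_sum, dotProduct]
    refine Finset.sum_congr rfl fun i _ => ?_
    rw [Complex.ofReal_pow, Pi.star_apply, RCLike.star_def, Complex.conj_mul']
  rw [h1, star_add, add_dotProduct, dotProduct_add, dotProduct_add]
  rw [Matrix.star_mulVec, conjTranspose_conjTranspose]
  rw [Matrix.dotProduct_mulVec (star x ᵥ* M) Mᴴ x, Matrix.vecMul_vecMul,
    ← Matrix.dotProduct_mulVec, ← Matrix.dotProduct_mulVec,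
    Matrix.dotProduct_mulVec (star b) Mᴴ x, ← Matrix.star_mulVec]
  ring

lemma trace_formula {n : ℕ} (A : Matrix (Fin n) (Fin n) ℂ) (s : ℝ) (u v : Fin n → ℂ) :
    (Aᴴ * Matrix.of fun i k => (s : ℂ) *
        (u i * starRingEnd ℂ (u k) - v i * starRingEnd ℂ (v k))).trace
      = (s : ℂ) * (starRingEnd ℂ (quadC A u) - starRingEnd ℂ (quadC A v)) := by
  rw [trace]
  simp only [diag, mul_apply, conjTranspose_apply, of_apply, quadC, dotProduct, mulVec,
    map_sub, map_sum, _root_.map_mul, Complex.conj_conj, Pi.star_apply, RCLike.star_def]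
  rw [Finset.sum_comm]
  simp only [mul_sub, sub_mul, Finset.mul_sum, Finset.sum_sub_distrib]
  congr 1 <;> refine Finset.sum_congr rfl fun i _ => ?_ <;>
    refine Finset.sum_congr rfl fun k _ => ?_ <;> ring

lemma rank_pair {n : ℕ} (s : ℝ) (u v : Fin n → ℂ) :
    (Matrix.of fun i k => (s : ℂ) *
      (u i * starRingEnd ℂ (u k) - v i * starRingEnd ℂ (v k))).rank ≤ 2 := by
  set C : Matrix (Fin n) (Fin 2) ℂ :=
    Matrix.of fun i t => if t = 0 then (s : ℂ) * u i else (s : ℂ) * v i with hC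
  set R : Matrix (Fin 2) (Fin n) ℂ :=
    Matrix.of fun t k => if t = 0 then starRingEnd ℂ (u k) else -starRingEnd ℂ (v k) with hR
  have hfac : (Matrix.of fun i k => (s : ℂ) *
      (u i * starRingEnd ℂ (u k) - v i * starRingEnd ℂ (v k))) = C * R := by
    ext i k
    simp only [of_apply, mul_apply, Fin.sum_univ_two, hC, hR]
    norm_num
    ring
  rw [hfac]
  calc (C * R).rank ≤ C.rank := Matrix.rank_mul_le_left C R
    _ ≤ Fintype.card (Fin 2) := Matrix.rank_le_card_width C
    _ = 2 := by simp

lemma subset_pair {α : Type*} [DecidableEq α] (a0 a1 : α) (h01 : a0 ≠ a1)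
    (s : Finset α) (hs : s.card ≤ 2) : ∃ j₁ j₂ : α, j₁ ≠ j₂ ∧ s ⊆ {j₁, j₂} := by
  rcases Nat.lt_or_ge s.card 1 with h | h
  · have hempty : s = ∅ := Finset.card_eq_zero.mp (by omega)
    exact ⟨a0, a1, h01, by simp [hempty]⟩
  rcases Nat.lt_or_ge s.card 2 with h2 | h2
  · have h1 : s.card = 1 := by omega
    obtain ⟨a, ha⟩ := Finset.card_eq_one.mp h1
    by_cases hA : a = a0
    · exact ⟨a0, a1, h01, by simp [ha, hA]⟩
    · exact ⟨a, a0, hA, by simp [ha]⟩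
  · have h2' : s.card = 2 := le_antisymm hs h2
    obtain ⟨a, c, hac, hs2⟩ := Finset.card_eq_two.mp h2'
    exact ⟨a, c, hac, by simp [hs2]⟩

end helpers

lemma core_false (r d m : ℕ)
    (M : Fin m → Matrix (Fin d) (Fin r) ℂ) (b : Fin m → Fin r → ℂ)
    (hinj : Function.Injective (fun x : Fin d → ℂ => fun j : Fin m =>
        ∑ i : Fin r, ‖((M j)ᴴ.mulVec x + b j) i‖ ^ 2))
    (Q : Matrix (Fin (d + 1)) (Fin (d + 1)) ℂ)
    (htr : ∀ j : Fin m, ((affineMeasMatrixC d r (M j) (b j))ᴴ * Q).trace = 0)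
    (hcol : ¬ ∀ i : Fin d, Q i.castSucc (Fin.last d) = 0)
    (α β : ℝ) (w₁ w₂ : Fin (d + 1) → ℂ)
    (hrepr : ∀ i k, Q i k = (α : ℂ) * (w₁ i * starRingEnd ℂ (w₁ k))
        + (β : ℂ) * (w₂ i * starRingEnd ℂ (w₂ k)))
    (hcorner : α * normSq (w₁ (Fin.last d)) + β * normSq (w₂ (Fin.last d)) = 0)
    (hα : 0 ≤ α) (hβ : β ≤ 0) : False := by
  set p := w₁ (Fin.last d) with hp'
  set q := w₂ (Fin.last d) with hq'
  set t := α * normSq p with ht'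
  have ht0 : 0 ≤ t := mul_nonneg hα (normSq_nonneg p)
  have hbq : β * normSq q = -t := by rw [ht']; linarith
  by_cases ht : t = 0
  · -- degenerate case
    have h1 : α = 0 ∨ p = 0 := by
      rcases mul_eq_zero.mp (ht' ▸ ht : α * normSq p = 0) with h | h
      · exact Or.inl h
      · exact Or.inr (normSq_eq_zero.mp h)
    have h2 : β = 0 ∨ q = 0 := by
      have : β * normSq q = 0 := by rw [hbq, ht, neg_zero]
      rcases mul_eq_zero.mp this with h | h
      · exact Or.inl h
      · exact Or.inr (normSq_eq_zero.mp h)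
    apply hcol
    intro i
    rw [hrepr, ← hp', ← hq']
    rcases h1 with h | h <;> rcases h2 with h' | h' <;> simp [h, h']
  · have htpos : 0 < t := lt_of_le_of_ne ht0 (Ne.symm ht)
    have hpne : p ≠ 0 := by
      intro h; apply ht; rw [ht', h, normSq_zero, mul_zero]
    have hqne : q ≠ 0 := by
      intro h; rw [h, normSq_zero, mul_zero] at hbq; linarith
    set u : Fin (d + 1) → ℂ := fun i => w₁ i / p with hu'
    set v : Fin (d + 1) → ℂ := fun i => w₂ i / q with hv'
    have hpc : (t : ℂ) = (α : ℂ) * (p * starRingEnd ℂ p) := by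
      rw [ht', Complex.ofReal_mul, Complex.mul_conj]
    have hqc : (β : ℂ) * (q * starRingEnd ℂ q) = -(t : ℂ) := by
      rw [Complex.mul_conj, ← Complex.ofReal_mul, hbq, Complex.ofReal_neg]
    have hpc' : starRingEnd ℂ p ≠ 0 := by simpa using hpne
    have hqc' : starRingEnd ℂ q ≠ 0 := by simpa using hqne
    have hQof : Q = Matrix.of fun i k => (t : ℂ) *
        (u i * starRingEnd ℂ (u k) - v i * starRingEnd ℂ (v k)) := by
      ext i k
      have e1 : (t : ℂ) * (u i * starRingEnd ℂ (u k))
          = (α : ℂ) * (w₁ i * starRingEnd ℂ (w₁ k)) := by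
        rw [hu']
        simp only [map_div₀]
        rw [hpc]
        field_simp
      have e2 : (t : ℂ) * (v i * starRingEnd ℂ (v k))
          = -((β : ℂ) * (w₂ i * starRingEnd ℂ (w₂ k))) := by
        have htq : (t : ℂ) = -((β : ℂ) * (q * starRingEnd ℂ q)) := by rw [hqc, neg_neg]
        rw [hv']
        simp only [map_div₀]
        rw [htq]
        field_simp
      rw [hrepr, of_apply, mul_sub, e1, e2]
      ring
    have hul : u (Fin.last d) = 1 := by rw [hu']; exact div_self hpne
    have hvl : v (Fin.last d) = 1 := by rw [hv']; exact div_self hqne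
    set x : Fin d → ℂ := fun i => u i.castSucc with hx'
    set y : Fin d → ℂ := fun i => v i.castSucc with hy'
    have hu2 : u = Fin.snoc x 1 := by
      funext i
      refine Fin.lastCases ?_ (fun i => ?_) i
      · rw [hul, Fin.snoc_last]
      · rw [Fin.snoc_castSucc]
    have hv2 : v = Fin.snoc y 1 := by
      funext i
      refine Fin.lastCases ?_ (fun i => ?_) i
      · rw [hvl, Fin.snoc_last]
      · rw [Fin.snoc_castSucc]
    have hquad : ∀ j : Fin m, quadC (affineMeasMatrixC d r (M j) (b j)) u
        = quadC (affineMeasMatrixC d r (M j) (b j)) v := by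
      intro j
      have := htr j
      rw [hQof, trace_formula] at this
      have ht2 : ((t : ℂ)) ≠ 0 := by
        simpa using ht
      have := (mul_eq_zero.mp this).resolve_left ht2
      have := sub_eq_zero.mp this
      exact (starRingEnd ℂ).injective this
    have hxy : x = y := by
      apply hinj
      funext j
      have h1 := meas_eq_quad (M j) (b j) x
      have h2 := meas_eq_quad (M j) (b j) y
      have h3 := hquad j
      rw [hu2, hv2] at h3
      rw [← h1, ← h2] at h3
      exact_mod_cast h3
    apply hcol
    intro i
    rw [hQof, of_apply, hu2, hv2, Fin.snoc_last, Fin.snoc_last, Fin.snoc_castSucc,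
      Fin.snoc_castSucc, hxy]
    ring

/-- `A = {(M_j, b_j)}_{j=1}^m` fails the generalized affine phase
retrieval property for ℂ^d iff there exists `Q ∈ ℂ^{(d+1)×(d+1)}` with `Q* = Q`,
`Q_{d+1,d+1} = 0`, `rank Q ≤ 2`, `tr(A_j* Q) = 0` for all `j`, and
`Q_{1,d+1}·Q_{d+1,1} + ⋯ + Q_{d,d+1}·Q_{d+1,d} = 1`. -/
theorem gapr_fail_iff_exists_Q_complex
    (r d m : ℕ) (hr : 1 ≤ r) (hd : 1 ≤ d) (hm : 1 ≤ m)
    (M : Fin m → Matrix (Fin d) (Fin r) ℂ) (b : Fin m → Fin r → ℂ) :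
    ¬ Function.Injective (fun x : Fin d → ℂ => fun j : Fin m =>
        ∑ i : Fin r, ‖((M j)ᴴ.mulVec x + b j) i‖ ^ 2)
    ↔ ∃ Q : Matrix (Fin (d + 1)) (Fin (d + 1)) ℂ,
        Qᴴ = Q ∧
        Q (Fin.last d) (Fin.last d) = 0 ∧
        Q.rank ≤ 2 ∧
        (∀ j : Fin m, ((affineMeasMatrixC d r (M j) (b j))ᴴ * Q).trace = 0) ∧
        ∑ i : Fin d, Q i.castSucc (Fin.last d) * Q (Fin.last d) i.castSucc = 1 := by
  constructor
  · -- forward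
    intro hni
    obtain ⟨x, y, hfeq, hxy⟩ := Function.not_injective_iff.mp hni
    set N : ℝ := ∑ i, Complex.normSq (x i - y i) with hN'
    have hNpos : 0 < N := by
      obtain ⟨i0, hi0⟩ : ∃ i, x i ≠ y i := by
        by_contra h
        push_neg at h
        exact hxy (funext h)
      refine Finset.sum_pos' (fun i _ => normSq_nonneg _) ⟨i0, Finset.mem_univ _, ?_⟩
      exact normSq_pos.mpr (sub_ne_zero.mpr hi0)
    set c : ℝ := (Real.sqrt N)⁻¹ with hc'
    have hc2 : c ^ 2 * N = 1 := by
      rw [hc', inv_pow, Real.sq_sqrt hNpos.le]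
      exact inv_mul_cancel₀ hNpos.ne'
    set u : Fin (d + 1) → ℂ := Fin.snoc x 1 with hu'
    set v : Fin (d + 1) → ℂ := Fin.snoc y 1 with hv'
    refine ⟨Matrix.of fun i k => (c : ℂ) *
      (u i * starRingEnd ℂ (u k) - v i * starRingEnd ℂ (v k)), ?_, ?_, ?_, ?_, ?_⟩
    · ext i k
      simp only [conjTranspose_apply, of_apply, RCLike.star_def, map_sub, _root_.map_mul,
        Complex.conj_conj, Complex.conj_ofReal]
      ring
    · simp only [of_apply, hu', hv', Fin.snoc_last]
      ring
    · exact rank_pair c u v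
    · intro j
      rw [trace_formula]
      have h1 := meas_eq_quad (M j) (b j) x
      have h2 := meas_eq_quad (M j) (b j) y
      have h3 : quadC (affineMeasMatrixC d r (M j) (b j)) u
          = quadC (affineMeasMatrixC d r (M j) (b j)) v := by
        rw [hu', hv', ← h1, ← h2]
        exact_mod_cast congrFun hfeq j
      rw [h3, sub_self, mul_zero]
    · have hterm : ∀ i : Fin d,
          ((Matrix.of fun i k => (c : ℂ) * (u i * starRingEnd ℂ (u k)
              - v i * starRingEnd ℂ (v k))) i.castSucc (Fin.last d))
          * ((Matrix.of fun i k => (c : ℂ) * (u i * starRingEnd ℂ (u k)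
              - v i * starRingEnd ℂ (v k))) (Fin.last d) i.castSucc)
          = ((c ^ 2 * Complex.normSq (x i - y i) : ℝ) : ℂ) := by
        intro i
        simp only [of_apply, hu', hv', Fin.snoc_last, Fin.snoc_castSucc, _root_.map_one,
          mul_one, one_mul]
        rw [Complex.ofReal_mul, Complex.normSq_eq_conj_mul_self, map_sub,
          Complex.ofReal_pow]
        ring
      rw [Finset.sum_congr rfl fun i _ => hterm i, ← Complex.ofReal_sum,
        ← Finset.mul_sum, ← hN', hc2, Complex.ofReal_one]
  · -- backward
    rintro ⟨Q, hQH, hlast, hrank, htr, hsum⟩ hinj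
    have h1 : Q.IsHermitian := hQH
    set U : Matrix (Fin (d + 1)) (Fin (d + 1)) ℂ :=
      ((h1.eigenvectorUnitary : unitaryGroup (Fin (d + 1)) ℂ) :
        Matrix (Fin (d + 1)) (Fin (d + 1)) ℂ) with hU'
    have hspec : ∀ i k, Q i k
        = ∑ j, (h1.eigenvalues j : ℂ) * (U i j * starRingEnd ℂ (U k j)) := by
      intro i k
      conv_lhs => rw [h1.spectral_theorem, Unitary.conjStarAlgAut_apply]
      rw [mul_apply]
      refine Finset.sum_congr rfl fun j _ => ?_
      rw [Matrix.mul_diagonal, star_apply, ← hU']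
      simp only [Function.comp_apply, RCLike.star_def]
      rw [show (RCLike.ofReal (h1.eigenvalues j) : ℂ) = Complex.ofReal (h1.eigenvalues j)
        from rfl]
      ring
    have hcard : (Finset.univ.filter (fun j => h1.eigenvalues j ≠ 0)).card ≤ 2 := by
      have := h1.rank_eq_card_non_zero_eigs
      rw [Fintype.card_subtype] at this
      omega
    have h01 : (0 : Fin (d + 1)) ≠ Fin.last d := by
      simp only [ne_eq, Fin.ext_iff, Fin.val_last, Fin.val_zero]
      omega
    obtain ⟨j₁, j₂, hj12, hsub⟩ := subset_pair (0 : Fin (d + 1)) (Fin.last d) h01 _ hcard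
    set α : ℝ := h1.eigenvalues j₁ with hα'
    set β : ℝ := h1.eigenvalues j₂ with hβ'
    set w₁ : Fin (d + 1) → ℂ := fun i => U i j₁ with hw1'
    set w₂ : Fin (d + 1) → ℂ := fun i => U i j₂ with hw2'
    have hrepr : ∀ i k, Q i k = (α : ℂ) * (w₁ i * starRingEnd ℂ (w₁ k))
        + (β : ℂ) * (w₂ i * starRingEnd ℂ (w₂ k)) := by
      intro i k
      rw [hspec i k]
      rw [← Finset.sum_subset (Finset.subset_univ ({j₁, j₂} : Finset (Fin (d + 1))))
        (fun j _ hj => ?_), Finset.sum_pair hj12]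
      have : j ∉ Finset.univ.filter (fun j => h1.eigenvalues j ≠ 0) :=
        fun hT => hj (hsub hT)
      simp only [Finset.mem_filter, Finset.mem_univ, true_and, not_not] at this
      rw [this]
      simp
    have hcol : ¬ ∀ i : Fin d, Q i.castSucc (Fin.last d) = 0 := by
      intro h
      rw [Finset.sum_congr rfl (fun i _ => by rw [h i, zero_mul])] at hsum
      simp at hsum
    have hcorner : α * normSq (w₁ (Fin.last d)) + β * normSq (w₂ (Fin.last d)) = 0 := by
      have := hlast
      rw [hrepr] at this
      rw [Complex.mul_conj, Complex.mul_conj] at this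
      exact_mod_cast this
    have hdeg : α * normSq (w₁ (Fin.last d)) = 0 → β * normSq (w₂ (Fin.last d)) = 0 →
        False := by
      intro e1 e2
      have t1 : ∀ i : Fin d, (α : ℂ) * (w₁ i.castSucc * starRingEnd ℂ (w₁ (Fin.last d)))
          = 0 := by
        intro i
        rcases mul_eq_zero.mp e1 with h | h
        · simp [h]
        · simp [normSq_eq_zero.mp h]
      have t2 : ∀ i : Fin d, (β : ℂ) * (w₂ i.castSucc * starRingEnd ℂ (w₂ (Fin.last d)))
          = 0 := by
        intro i
        rcases mul_eq_zero.mp e2 with h | h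
        · simp [h]
        · simp [normSq_eq_zero.mp h]
      apply hcol
      intro i
      rw [hrepr, t1 i, t2 i, add_zero]
    rcases le_or_gt 0 α with hA | hA <;> rcases le_or_gt 0 β with hB | hB
    · -- both nonneg: degenerate
      have e1 : α * normSq (w₁ (Fin.last d)) = 0 := by
        have n1 : 0 ≤ α * normSq (w₁ (Fin.last d)) := mul_nonneg hA (normSq_nonneg _)
        have n2 : 0 ≤ β * normSq (w₂ (Fin.last d)) := mul_nonneg hB (normSq_nonneg _)
        linarith
      have e2 : β * normSq (w₂ (Fin.last d)) = 0 := by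
        have n1 : 0 ≤ α * normSq (w₁ (Fin.last d)) := mul_nonneg hA (normSq_nonneg _)
        linarith
      exact hdeg e1 e2
    · exact core_false r d m M b hinj Q htr hcol α β w₁ w₂ hrepr hcorner hA hB.le
    · refine core_false r d m M b hinj Q htr hcol β α w₂ w₁ (fun i k => ?_) (by linarith)
        hB hA.le
      rw [hrepr]; ring
    · -- both negative: degenerate
      have e1 : α * normSq (w₁ (Fin.last d)) = 0 := by
        have n1 : α * normSq (w₁ (Fin.last d)) ≤ 0 :=
          mul_nonpos_of_nonpos_of_nonneg hA.le (normSq_nonneg _)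
        have n2 : β * normSq (w₂ (Fin.last d)) ≤ 0 :=
          mul_nonpos_of_nonpos_of_nonneg hB.le (normSq_nonneg _)
        linarith
      have e2 : β * normSq (w₂ (Fin.last d)) = 0 := by
        have n1 : α * normSq (w₁ (Fin.last d)) ≤ 0 :=
          mul_nonpos_of_nonpos_of_nonneg hA.le (normSq_nonneg _)
        linarith
      exact hdeg e1 e2
end
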